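/- arXiv:1707.00373 — 3 statements merged into one kernel-verified Lean document; each statement's English description precedes it below -/
import Mathlib

section
/- Let n ≥ 2, ℓ ≥ 1, and let Γ : ({0,1}^ℓ)^n → ℂ be a blockwise symmetric matchgate signature of arity nℓ (i.e., Γ is blockwise symmetric in size ℓ and satisfies the parity condition and the Matchgate Identities) whose matrix form M(Γ) has rank at least 2. Suppose σ, τ ∈ {0,1}^ℓ are such that the rows M(Γ)^σ and M(Γ)^τ are linearly independent, and wt(σ+τ) = min { wt(u+v) : u, v ∈ {0,1}^ℓ and M(Γ)^u, M(Γ)^v are linearly independent }. Then wt(σ+τ) = 1. -/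
open Finset

namespace Matchgate

/-- Bitwise XOR of two bit strings. -/
def bxor {m : ℕ} (a b : Fin m → Bool) : Fin m → Bool := fun i => Bool.xor (a i) (b i)

/-- The bit string `e_p` with a `1` in position `p` and `0` elsewhere. -/
def unit {m : ℕ} (p : Fin m) : Fin m → Bool := fun i => decide (i = p)

/-- Hamming weight of a bit string. -/
def wt {m : ℕ} (a : Fin m → Bool) : ℕ := (Finset.univ.filter fun i => a i = true).card

/-- Total Hamming weight of a blockwise bit string. -/
def wtB {n ℓ : ℕ} (α : Fin n → Fin ℓ → Bool) : ℕ := ∑ j, wt (α j)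

/-- Blockwise XOR. -/
def bxorB {n ℓ : ℕ} (α β : Fin n → Fin ℓ → Bool) : Fin n → Fin ℓ → Bool :=
  fun j => bxor (α j) (β j)

/-- The parity bit `p(a) = wt(a) mod 2` of a bit string, as a `Bool`. -/
def pB {m : ℕ} (a : Fin m → Bool) : Bool := decide (wt a % 2 = 1)

/-- A blockwise signature (blocks of size `ℓ`, `n` blocks) is blockwise symmetric if it is
invariant under every permutation of its blocks. -/
def BlockSym {n ℓ : ℕ} (Γ : (Fin n → Fin ℓ → Bool) → ℂ) : Prop :=
  ∀ (σ : Equiv.Perm (Fin n)) (α : Fin n → Fin ℓ → Bool), Γ (α ∘ σ) = Γ α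

/-- The parity condition for a blockwise signature: either all even entries vanish or all
odd entries vanish. -/
def ParityCond {n ℓ : ℕ} (Γ : (Fin n → Fin ℓ → Bool) → ℂ) : Prop :=
  (∀ α, wtB α % 2 = 0 → Γ α = 0) ∨ (∀ α, wtB α % 2 = 1 → Γ α = 0)

/-- The Matchgate Identities for a blockwise signature.  Positions are pairs `(j, i)`
(block `j`, bit `i` within the block) ordered lexicographically block-major, which is the
order of the flattened bit string `α₁α₂⋯αₙ`.  For every pattern `α` and every position set
`P`, the alternating sum `Σ_{p ∈ P} (-1)^{rank of p in P} Γ(α + e_p) Γ(α + P + e_p)`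
vanishes. -/
def MGI {n ℓ : ℕ} (Γ : (Fin n → Fin ℓ → Bool) → ℂ) : Prop :=
  ∀ (α : Fin n → Fin ℓ → Bool) (P : Finset (Fin n × Fin ℓ)),
    ∑ p ∈ P,
      (-1 : ℂ) ^ (P.filter fun q => q.1 < p.1 ∨ (q.1 = p.1 ∧ q.2 ≤ p.2)).card *
        Γ (fun j i => Bool.xor (α j i) (decide ((j, i) = p))) *
        Γ (fun j i => Bool.xor (α j i)
            (Bool.xor (decide ((j, i) ∈ P)) (decide ((j, i) = p)))) = 0

/-- Prepend an element to a length `n - 1` tuple, giving a length `n` tuple. -/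
def cons0 {n : ℕ} {X : Type*} (a : X) (b : Fin (n - 1) → X) : Fin n → X :=
  fun j => if h : (j : ℕ) = 0 then a else b ⟨(j : ℕ) - 1, by have := j.isLt; omega⟩

/-- The matrix form `M(Γ)` of a blockwise signature: rows indexed by the first block,
columns by the remaining `n - 1` blocks. -/
def matrixForm {n ℓ : ℕ} (Γ : (Fin n → Fin ℓ → Bool) → ℂ) :
    Matrix (Fin ℓ → Bool) (Fin (n - 1) → Fin ℓ → Bool) ℂ :=
  Matrix.of fun a b => Γ (cons0 a b)

/-- XOR block `j` of `α` with `c`, leaving the other blocks unchanged. -/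
def flipBlock {n ℓ : ℕ} (α : Fin n → Fin ℓ → Bool) (j : Fin n) (c : Fin ℓ → Bool) :
    Fin n → Fin ℓ → Bool := Function.update α j (bxor (α j) c)

/-- Insert block `c` at position `t` into a tuple of `n - 1` blocks. -/
def insertAt {n ℓ : ℕ} (t : Fin n) (c : Fin ℓ → Bool) (β : Fin (n - 1) → Fin ℓ → Bool) :
    Fin n → Fin ℓ → Bool :=
  fun j =>
    if h1 : (j : ℕ) = (t : ℕ) then c
    else if h2 : (j : ℕ) < (t : ℕ) then
      β ⟨(j : ℕ), by have := t.isLt; have := j.isLt; omega⟩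
    else β ⟨(j : ℕ) - 1, by have := t.isLt; have := j.isLt; omega⟩

/-- The parity condition for a flat (Boolean-bit) signature. -/
def ParityCond1 {m : ℕ} (Γ : (Fin m → Bool) → ℂ) : Prop :=
  (∀ α, wt α % 2 = 0 → Γ α = 0) ∨ (∀ α, wt α % 2 = 1 → Γ α = 0)

/-- The Matchgate Identities for a flat (Boolean-bit) signature. -/
def MGI1 {m : ℕ} (Γ : (Fin m → Bool) → ℂ) : Prop :=
  ∀ (α : Fin m → Bool) (P : Finset (Fin m)),
    ∑ p ∈ P,
      (-1 : ℂ) ^ (P.filter fun q => q ≤ p).card *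
        Γ (fun k => Bool.xor (α k) (decide (k = p))) *
        Γ (fun k => Bool.xor (α k) (Bool.xor (decide (k ∈ P)) (decide (k = p)))) = 0

lemma cons0_head {n : ℕ} {X : Type*} (a : X) (b : Fin (n-1) → X) (j : Fin n)
    (h : (j : ℕ) = 0) : cons0 a b j = a := by simp [cons0, h]

lemma cons0_tail {n : ℕ} {X : Type*} (a : X) (b : Fin (n-1) → X) (j : Fin n)
    (h : (j : ℕ) ≠ 0) : cons0 a b j = b ⟨(j:ℕ) - 1, by have := j.isLt; omega⟩ := by
  simp [cons0, h]

lemma wtB_cons0 {m ℓ : ℕ} (a : Fin ℓ → Bool) (b : Fin (m+1-1) → Fin ℓ → Bool) :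
    wtB (cons0 a b : Fin (m+1) → Fin ℓ → Bool) = wt a + wtB b := by
  unfold wtB
  rw [Fin.sum_univ_succ, cons0_head a b 0 rfl]
  congr 1

lemma wt_unit {m : ℕ} (p : Fin m) : wt (unit p) = 1 := by
  unfold wt unit
  rw [show (Finset.univ.filter fun i => (decide (i = p)) = true) = {p} by ext i; simp]
  simp

lemma wt_card_filter {m : ℕ} (a : Fin m → Bool) :
    wt a = ∑ i, (if a i = true then 1 else 0) := Finset.card_filter _ _

lemma wt_parity {m : ℕ} (a b : Fin m → Bool) :
    (wt a + wt b) % 2 = wt (bxor a b) % 2 := by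
  have key : wt a + wt b = wt (bxor a b) + 2 * ∑ i, (if a i = true ∧ b i = true then 1 else 0) := by
    rw [wt_card_filter, wt_card_filter, wt_card_filter, Finset.mul_sum,
      ← Finset.sum_add_distrib, ← Finset.sum_add_distrib]
    refine Finset.sum_congr rfl fun i _ => ?_
    unfold bxor
    cases ha : a i <;> cases hb : b i <;> simp
  omega

lemma bxor_self_left {m : ℕ} (a b : Fin m → Bool) : bxor a (bxor a b) = b := by
  funext i; simp [bxor]

lemma mf_apply {m ℓ : ℕ} (Γ : (Fin (m+1) → Fin ℓ → Bool) → ℂ) (u : Fin ℓ → Bool)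
    (γ : Fin (m+1-1) → Fin ℓ → Bool) : matrixForm Γ u γ = Γ (cons0 u γ) := rfl

/-- rows of opposite weight parity that are both nonzero are linearly independent -/

lemma indep_of_odd {m ℓ : ℕ} (Γ : (Fin (m+1) → Fin ℓ → Bool) → ℂ) (hpar : ParityCond Γ)
    (u v : Fin ℓ → Bool) (hodd : (wt u + wt v) % 2 = 1)
    (hu : matrixForm Γ u ≠ 0) (hv : matrixForm Γ v ≠ 0) :
    LinearIndependent ℂ ![matrixForm Γ u, matrixForm Γ v] := by
  have hzero : ∀ γ, matrixForm Γ u γ = 0 ∨ matrixForm Γ v γ = 0 := by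
    intro γ
    by_contra h
    push_neg at h
    have h1 : Γ (cons0 u γ) ≠ 0 := h.1
    have h2 : Γ (cons0 v γ) ≠ 0 := h.2
    have w1 := wtB_cons0 u γ
    have w2 := wtB_cons0 v γ
    rcases hpar with hp | hp
    · have e1 : wtB (cons0 u γ : Fin (m+1) → Fin ℓ → Bool) % 2 ≠ 0 := fun hh => h1 (hp _ hh)
      have e2 : wtB (cons0 v γ : Fin (m+1) → Fin ℓ → Bool) % 2 ≠ 0 := fun hh => h2 (hp _ hh)
      omega
    · have e1 : wtB (cons0 u γ : Fin (m+1) → Fin ℓ → Bool) % 2 ≠ 1 := fun hh => h1 (hp _ hh)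
      have e2 : wtB (cons0 v γ : Fin (m+1) → Fin ℓ → Bool) % 2 ≠ 1 := fun hh => h2 (hp _ hh)
      omega
  rw [LinearIndependent.pair_iff]
  intro s t hst
  obtain ⟨γu, hγu⟩ := Function.ne_iff.mp hu
  obtain ⟨γv, hγv⟩ := Function.ne_iff.mp hv
  simp only [Pi.zero_apply] at hγu hγv
  have hvu : matrixForm Γ v γu = 0 := by
    rcases hzero γu with h | h
    · exact absurd h hγu
    · exact h
  have huv : matrixForm Γ u γv = 0 := by
    rcases hzero γv with h | h
    · exact h
    · exact absurd h hγv
  have e1 := congrFun hst γu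
  have e2 := congrFun hst γv
  simp only [Pi.add_apply, Pi.smul_apply, smul_eq_mul, Pi.zero_apply, hvu, huv,
    mul_zero, add_zero, zero_add] at e1 e2
  exact ⟨by_contra fun hs => hγu ((mul_eq_zero.mp e1).resolve_left hs),
    by_contra fun ht => hγv ((mul_eq_zero.mp e2).resolve_left ht)⟩

lemma rows_dep {C : Type*} (x y : C → ℂ) (hx : x ≠ 0)
    (hm : ∀ β γ, x β * y γ = y β * x γ) : ∃ c : ℂ, y = c • x := by
  obtain ⟨β0, h0⟩ := Function.ne_iff.mp hx
  simp only [Pi.zero_apply] at h0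
  refine ⟨y β0 / x β0, ?_⟩
  funext γ
  rw [Pi.smul_apply, smul_eq_mul, div_mul_eq_mul_div, eq_div_iff h0]
  linear_combination hm β0 γ

lemma succ_mk {m : ℕ} (j : Fin (m+1)) (h : (j:ℕ) ≠ 0) :
    Fin.succ (⟨(j:ℕ) - 1, by have := j.isLt; omega⟩ : Fin (m+1-1)) = j := by
  apply Fin.ext
  simp [Fin.val_succ]
  omega

lemma ext_A0 {m ℓ : ℕ} (u : Fin ℓ → Bool) (β : Fin (m+1-1) → Fin ℓ → Bool) (p : Fin ℓ) :
    (fun (j : Fin (m+1)) (i : Fin ℓ) =>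
        Bool.xor (cons0 u β j i) (decide ((j, i) = ((0 : Fin (m+1)), p)))) =
      cons0 (bxor u (unit p)) β := by
  funext j i
  by_cases hj : (j : ℕ) = 0
  · have hj0 : j = (0 : Fin (m+1)) := Fin.ext hj
    subst hj0
    rw [cons0_head _ _ _ rfl, cons0_head _ _ _ rfl]
    simp [bxor, unit, Prod.ext_iff]
  · rw [cons0_tail _ _ _ hj, cons0_tail _ _ _ hj]
    have : ((j, i) = ((0 : Fin (m+1)), p)) = False := by
      simp [Prod.ext_iff, Fin.ext_iff, hj]
    simp [this]

lemma ext_AQ {m ℓ : ℕ} (u : Fin ℓ → Bool) (β : Fin (m+1-1) → Fin ℓ → Bool)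
    (r : Fin (m+1) × Fin ℓ) (hr : (r.1 : ℕ) ≠ 0) :
    (fun (j : Fin (m+1)) (i : Fin ℓ) =>
        Bool.xor (cons0 u β j i) (decide ((j, i) = r))) =
      cons0 u (fun j i => Bool.xor (β j i) (decide ((Fin.succ j, i) = r))) := by
  funext j i
  by_cases hj : (j : ℕ) = 0
  · rw [cons0_head _ _ _ hj, cons0_head _ _ _ hj]
    have : ((j, i) = r) = False := by
      simp only [eq_iff_iff, iff_false]
      intro h
      exact hr (by rw [← h]; exact hj)
    simp [this]
  · rw [cons0_tail _ _ _ hj, cons0_tail _ _ _ hj]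
    rw [succ_mk j hj]

lemma ext_B {m ℓ : ℕ} (u : Fin ℓ → Bool) (β : Fin (m+1-1) → Fin ℓ → Bool)
    (P Q : Finset (Fin (m+1) × Fin ℓ)) (s : Finset (Fin ℓ))
    (hP0 : ∀ i : Fin ℓ, (((0 : Fin (m+1)), i) ∈ P) ↔ i ∈ s)
    (hPpos : ∀ j : Fin (m+1), (j : ℕ) ≠ 0 → ∀ i, ((j, i) ∈ P ↔ (j, i) ∈ Q))
    (p : Fin ℓ) :
    (fun (j : Fin (m+1)) (i : Fin ℓ) =>
        Bool.xor (cons0 u β j i)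
          (Bool.xor (decide ((j, i) ∈ P)) (decide ((j, i) = ((0 : Fin (m+1)), p))))) =
      cons0 (fun i => Bool.xor (u i) (Bool.xor (decide (i ∈ s)) (decide (i = p))))
        (fun j i => Bool.xor (β j i) (decide ((Fin.succ j, i) ∈ Q))) := by
  funext j i
  by_cases hj : (j : ℕ) = 0
  · have hj0 : j = (0 : Fin (m+1)) := Fin.ext hj
    subst hj0
    rw [cons0_head _ _ _ rfl, cons0_head _ _ _ rfl]
    rw [decide_eq_decide.mpr (hP0 i), decide_eq_decide.mpr (show ((0 : Fin (m+1)), i) = ((0 : Fin (m+1)), p) ↔ i = p by simp)]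
  · rw [cons0_tail _ _ _ hj, cons0_tail _ _ _ hj]
    rw [succ_mk j hj]
    have hd : decide ((j, i) ∈ P) = decide ((j, i) ∈ Q) := decide_eq_decide.mpr (hPpos j hj i)
    rw [hd]
    have : ((j, i) = ((0 : Fin (m+1)), p)) = False := by
      simp [Prod.ext_iff, Fin.ext_iff, hj]
    simp [this]

lemma key_final {m ℓ : ℕ} (Γ : (Fin (m+1) → Fin ℓ → Bool) → ℂ) (hmgi : MGI Γ)
    (σ : Fin ℓ → Bool)
    (H1 : ∀ p : Fin ℓ, matrixForm Γ (bxor σ (unit p)) = 0)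
    (s : Finset (Fin ℓ)) (p1 : Fin ℓ) (hp1 : p1 ∈ s)
    (H2 : ∀ p ∈ s, p ≠ p1 → matrixForm Γ (bxor (bxor σ (unit p1)) (unit p)) = 0)
    (β : Fin (m+1-1) → Fin ℓ → Bool) (Q : Finset (Fin (m+1) × Fin ℓ))
    (hQ : ∀ r ∈ Q, (r.1 : ℕ) ≠ 0) :
    Γ (cons0 σ β) *
      Γ (cons0 (fun i => Bool.xor (σ i) (decide (i ∈ s)))
          (fun j i => Bool.xor (β j i) (decide ((Fin.succ j, i) ∈ Q)))) = 0 := by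
  classical
  set P : Finset (Fin (m+1) × Fin ℓ) :=
    (s.image (fun p => ((0 : Fin (m+1)), p))) ∪ Q with hP
  have hz0 : ∀ i : Fin ℓ, (((0 : Fin (m+1)), i) ∈ P) ↔ i ∈ s := by
    intro i
    simp only [hP, Finset.mem_union, Finset.mem_image]
    constructor
    · rintro (⟨p, hp, he⟩ | hqm)
      · have : p = i := by simpa [Prod.ext_iff] using he
        exact this ▸ hp
      · exact absurd rfl (hQ _ hqm)
    · intro hp
      exact Or.inl ⟨i, hp, rfl⟩
  have hzpos : ∀ j : Fin (m+1), (j : ℕ) ≠ 0 → ∀ i, ((j, i) ∈ P ↔ (j, i) ∈ Q) := by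
    intro j hj i
    simp only [hP, Finset.mem_union, Finset.mem_image]
    constructor
    · rintro (⟨p, hp, he⟩ | hqm)
      · exfalso
        apply hj
        have hje : (0 : Fin (m+1)) = j := congrArg Prod.fst he
        simp [← hje]
      · exact hqm
    · exact Or.inr
  have hmem : ((0 : Fin (m+1)), p1) ∈ P := hP ▸ Finset.mem_union_left _ (Finset.mem_image.mpr ⟨p1, hp1, rfl⟩)
  have hsum := hmgi (cons0 (bxor σ (unit p1)) β) P
  have hzero : ∀ r ∈ P, r ≠ ((0 : Fin (m+1)), p1) →
      (-1 : ℂ) ^ (P.filter fun q => q.1 < r.1 ∨ (q.1 = r.1 ∧ q.2 ≤ r.2)).card *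
        Γ (fun j i => Bool.xor (cons0 (bxor σ (unit p1)) β j i) (decide ((j, i) = r))) *
        Γ (fun j i => Bool.xor (cons0 (bxor σ (unit p1)) β j i)
            (Bool.xor (decide ((j, i) ∈ P)) (decide ((j, i) = r)))) = 0 := by
    intro r hr hne
    rcases Finset.mem_union.mp (hP ▸ hr) with him | hqm
    · obtain ⟨p, hp, rfl⟩ := Finset.mem_image.mp him
      have hpne : p ≠ p1 := fun h => hne (by rw [h])
      rw [ext_A0 (bxor σ (unit p1)) β p]
      have h0 : Γ (cons0 (bxor (bxor σ (unit p1)) (unit p)) β) = 0 := by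
        have := congrFun (H2 p hp hpne) β
        simpa [matrixForm] using this
      rw [h0]
      ring
    · rw [ext_AQ (bxor σ (unit p1)) β r (hQ r hqm)]
      have h0 : Γ (cons0 (bxor σ (unit p1))
          (fun j i => Bool.xor (β j i) (decide ((Fin.succ j, i) = r)))) = 0 := by
        have := congrFun (H1 p1) (fun j i => Bool.xor (β j i) (decide ((Fin.succ j, i) = r)))
        simpa [matrixForm] using this
      rw [h0]
      ring
  rw [Finset.sum_eq_single_of_mem ((0 : Fin (m+1)), p1) hmem hzero] at hsum
  rw [ext_A0 (bxor σ (unit p1)) β p1,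
    ext_B (bxor σ (unit p1)) β P Q s hz0 hzpos p1] at hsum
  have e1 : bxor (bxor σ (unit p1)) (unit p1) = σ := by
    funext i
    simp [bxor]
  have e2 : (fun i => Bool.xor (bxor σ (unit p1) i)
      (Bool.xor (decide (i ∈ s)) (decide (i = p1)))) =
      (fun i => Bool.xor (σ i) (decide (i ∈ s))) := by
    funext i
    simp only [bxor, unit]
    cases h1 : σ i <;> cases h2 : decide (i = p1) <;> cases h3 : decide (i ∈ s) <;> simp
  rw [e1, e2] at hsum
  rcases mul_eq_zero.mp hsum with h | h
  · rcases mul_eq_zero.mp h with h' | h'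
    · exact absurd h' (pow_ne_zero _ (by norm_num))
    · rw [h', zero_mul]
  · rw [h, mul_zero]

lemma key_minor {m ℓ : ℕ} (Γ : (Fin (m+1) → Fin ℓ → Bool) → ℂ) (hmgi : MGI Γ)
    (σ : Fin ℓ → Bool)
    (H1 : ∀ p : Fin ℓ, matrixForm Γ (bxor σ (unit p)) = 0)
    (p1 p2 : Fin ℓ) (hlt : p1 < p2)
    (β : Fin (m+1-1) → Fin ℓ → Bool) (Q : Finset (Fin (m+1) × Fin ℓ))
    (hQ : ∀ r ∈ Q, (r.1 : ℕ) ≠ 0) :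
    Γ (cons0 σ β) *
      Γ (cons0 (bxor σ (bxor (unit p1) (unit p2)))
          (fun j i => Bool.xor (β j i) (decide ((Fin.succ j, i) ∈ Q)))) =
    Γ (cons0 (bxor σ (bxor (unit p1) (unit p2))) β) *
      Γ (cons0 σ (fun j i => Bool.xor (β j i) (decide ((Fin.succ j, i) ∈ Q)))) := by
  classical
  have hne12 : p1 ≠ p2 := ne_of_lt hlt
  set P : Finset (Fin (m+1) × Fin ℓ) :=
    insert ((0 : Fin (m+1)), p1) (insert ((0 : Fin (m+1)), p2) Q) with hP
  have hq1 : ((0 : Fin (m+1)), p1) ∉ Q := fun h => (hQ _ h) rfl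
  have hq2 : ((0 : Fin (m+1)), p2) ∉ Q := fun h => (hQ _ h) rfl
  have hn1 : ((0 : Fin (m+1)), p1) ∉ insert ((0 : Fin (m+1)), p2) Q := by
    simp only [Finset.mem_insert]
    rintro (h | h)
    · exact hne12 (by simpa [Prod.ext_iff] using h)
    · exact hq1 h
  have hz0 : ∀ i : Fin ℓ, (((0 : Fin (m+1)), i) ∈ P) ↔ i ∈ ({p1, p2} : Finset (Fin ℓ)) := by
    intro i
    simp only [hP, Finset.mem_insert, Finset.mem_singleton, Prod.mk.injEq, true_and]
    constructor
    · rintro (h | h | h)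
      · exact Or.inl h
      · exact Or.inr h
      · exact absurd rfl (hQ _ h)
    · rintro (h | h)
      · exact Or.inl h
      · exact Or.inr (Or.inl h)
  have hzpos : ∀ j : Fin (m+1), (j : ℕ) ≠ 0 → ∀ i, ((j, i) ∈ P ↔ (j, i) ∈ Q) := by
    intro j hj i
    simp only [hP, Finset.mem_insert, Prod.mk.injEq]
    constructor
    · rintro (⟨h, -⟩ | ⟨h, -⟩ | h)
      · exact absurd (by rw [h]; rfl) hj
      · exact absurd (by rw [h]; rfl) hj
      · exact h
    · intro h
      exact Or.inr (Or.inr h)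
  have hsum := hmgi (cons0 (bxor σ (unit p1)) β) P
  rw [hP] at hsum
  rw [Finset.sum_insert hn1, Finset.sum_insert hq2] at hsum
  rw [← hP] at hsum
  -- the Q-sum vanishes
  have hQzero : ∀ r ∈ Q,
      (-1 : ℂ) ^ (P.filter fun q => q.1 < r.1 ∨ (q.1 = r.1 ∧ q.2 ≤ r.2)).card *
        Γ (fun j i => Bool.xor (cons0 (bxor σ (unit p1)) β j i) (decide ((j, i) = r))) *
        Γ (fun j i => Bool.xor (cons0 (bxor σ (unit p1)) β j i)
            (Bool.xor (decide ((j, i) ∈ P)) (decide ((j, i) = r)))) = 0 := by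
    intro r hqm
    rw [ext_AQ (bxor σ (unit p1)) β r (hQ r hqm)]
    have h0 : Γ (cons0 (bxor σ (unit p1))
        (fun j i => Bool.xor (β j i) (decide ((Fin.succ j, i) = r)))) = 0 := by
      have := congrFun (H1 p1) (fun j i => Bool.xor (β j i) (decide ((Fin.succ j, i) = r)))
      simpa [matrixForm] using this
    rw [h0]
    ring
  rw [Finset.sum_eq_zero hQzero] at hsum
  -- identify the two surviving terms
  rw [ext_A0 (bxor σ (unit p1)) β p1, ext_A0 (bxor σ (unit p1)) β p2,
    ext_B (bxor σ (unit p1)) β P Q {p1, p2} hz0 hzpos p1,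
    ext_B (bxor σ (unit p1)) β P Q {p1, p2} hz0 hzpos p2] at hsum
  have e1 : bxor (bxor σ (unit p1)) (unit p1) = σ := by
    funext i; simp [bxor]
  have e2 : bxor (bxor σ (unit p1)) (unit p2) = bxor σ (bxor (unit p1) (unit p2)) := by
    funext i; simp [bxor, Bool.xor_assoc]
  have e3 : (fun i => Bool.xor (bxor σ (unit p1) i)
      (Bool.xor (decide (i ∈ ({p1, p2} : Finset (Fin ℓ)))) (decide (i = p1)))) =
      bxor σ (bxor (unit p1) (unit p2)) := by
    funext i
    simp only [bxor, unit, Finset.mem_insert, Finset.mem_singleton]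
    by_cases h1 : i = p1
    · subst h1
      simp [hne12]
    · by_cases h2 : i = p2
      · subst h2
        simp [h1]
      · simp [h1, h2]
  have e4 : (fun i => Bool.xor (bxor σ (unit p1) i)
      (Bool.xor (decide (i ∈ ({p1, p2} : Finset (Fin ℓ)))) (decide (i = p2)))) = σ := by
    funext i
    simp only [bxor, unit, Finset.mem_insert, Finset.mem_singleton]
    by_cases h1 : i = p1
    · subst h1
      simp [hne12]
    · by_cases h2 : i = p2
      · subst h2
        simp [h1]
      · simp [h1, h2]
  rw [e1, e2, e3, e4] at hsum
  -- compute the two signs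
  have hfilt1 : (P.filter fun q =>
      q.1 < ((0 : Fin (m+1)), p1).1 ∨ (q.1 = ((0 : Fin (m+1)), p1).1 ∧ q.2 ≤ ((0 : Fin (m+1)), p1).2)) =
      {((0 : Fin (m+1)), p1)} := by
    ext r
    simp only [Finset.mem_filter, Finset.mem_singleton, hP, Finset.mem_insert]
    constructor
    · rintro ⟨(rfl | rfl | hq), hpred⟩
      · rfl
      · rcases hpred with h | ⟨-, h⟩
        · exact absurd h (by simp [Fin.lt_def])
        · exact absurd h hlt.not_ge
      · rcases hpred with h | ⟨h, -⟩
        · exact absurd h (by simp [Fin.lt_def])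
        · exact absurd h (fun h' => hQ _ hq (by rw [h']; simp))
    · rintro rfl
      exact ⟨Or.inl rfl, Or.inr ⟨rfl, le_refl _⟩⟩
  have hfilt2 : (P.filter fun q =>
      q.1 < ((0 : Fin (m+1)), p2).1 ∨ (q.1 = ((0 : Fin (m+1)), p2).1 ∧ q.2 ≤ ((0 : Fin (m+1)), p2).2)) =
      {((0 : Fin (m+1)), p1), ((0 : Fin (m+1)), p2)} := by
    ext r
    simp only [Finset.mem_filter, Finset.mem_singleton, hP, Finset.mem_insert]
    constructor
    · rintro ⟨(rfl | rfl | hq), hpred⟩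
      · exact Or.inl rfl
      · exact Or.inr rfl
      · rcases hpred with h | ⟨h, -⟩
        · exact absurd h (by simp [Fin.lt_def])
        · exact absurd h (fun h' => hQ _ hq (by rw [h']; simp))
    · rintro (rfl | rfl)
      · exact ⟨Or.inl rfl, Or.inr ⟨rfl, le_of_lt hlt⟩⟩
      · exact ⟨Or.inr (Or.inl rfl), Or.inr ⟨rfl, le_refl _⟩⟩
  rw [hfilt1, hfilt2] at hsum
  rw [Finset.card_singleton] at hsum
  have hcard2 : ({((0 : Fin (m+1)), p1), ((0 : Fin (m+1)), p2)} : Finset (Fin (m+1) × Fin ℓ)).card = 2 := by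
    rw [Finset.card_insert_of_notMem (by simp [Prod.ext_iff, hne12]), Finset.card_singleton]
  rw [hcard2] at hsum
  linear_combination -hsum

lemma cons0_succ {m : ℕ} {X : Type*} (a : X) (b : Fin (m+1-1) → X) (j : Fin (m+1-1)) :
    (cons0 a b : Fin (m+1) → X) (Fin.succ j) = b j := by
  rw [cons0_tail _ _ _ (by simp [Fin.val_succ])]
  exact congrArg b (Fin.ext (by simp [Fin.val_succ]))

lemma exists_Q {m ℓ : ℕ} (β γ : Fin (m+1-1) → Fin ℓ → Bool) :
    ∃ Q : Finset (Fin (m+1) × Fin ℓ), (∀ r ∈ Q, (r.1 : ℕ) ≠ 0) ∧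
      (fun (j : Fin (m+1-1)) (i : Fin ℓ) => Bool.xor (β j i) (decide ((Fin.succ j, i) ∈ Q))) = γ := by
  classical
  refine ⟨Finset.univ.filter (fun r : Fin (m+1) × Fin ℓ =>
      (cons0 (fun _ => false) β : Fin (m+1) → Fin ℓ → Bool) r.1 r.2 ≠
      (cons0 (fun _ => false) γ : Fin (m+1) → Fin ℓ → Bool) r.1 r.2), ?_, ?_⟩
  · intro r hr h0
    have hm2 := (Finset.mem_filter.mp hr).2
    apply hm2
    rw [cons0_head _ _ _ h0, cons0_head _ _ _ h0]
  · funext j i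
    have hmem : decide ((Fin.succ j, i) ∈ Finset.univ.filter (fun r : Fin (m+1) × Fin ℓ =>
        (cons0 (fun _ => false) β : Fin (m+1) → Fin ℓ → Bool) r.1 r.2 ≠
        (cons0 (fun _ => false) γ : Fin (m+1) → Fin ℓ → Bool) r.1 r.2)) =
        decide (β j i ≠ γ j i) := by
      apply decide_eq_decide.mpr
      simp only [Finset.mem_filter, Finset.mem_univ, true_and]
      rw [cons0_succ, cons0_succ]
    rw [hmem]
    cases hb : β j i <;> cases hg : γ j i <;> simp

lemma wt_sub_two {ℓ : ℕ} (w : Fin ℓ → Bool) (p q : Fin ℓ) (hpq : p ≠ q)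
    (hp : w p = true) (hq : w q = true) :
    wt (fun i => Bool.xor (w i) (Bool.xor (decide (i = p)) (decide (i = q)))) + 2 = wt w := by
  unfold wt
  have hset : (Finset.univ.filter fun i =>
      (Bool.xor (w i) (Bool.xor (decide (i = p)) (decide (i = q)))) = true)
      = (Finset.univ.filter fun i => w i = true) \ {p, q} := by
    ext i
    simp only [Finset.mem_filter, Finset.mem_univ, true_and, Finset.mem_sdiff,
      Finset.mem_insert, Finset.mem_singleton]
    by_cases h1 : i = p
    · subst h1
      simp [hpq, hp]
    · by_cases h2 : i = q
      · subst h2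
        simp [hq, h1]
      · simp [h1, h2]
  rw [hset]
  have hsub : ({p, q} : Finset (Fin ℓ)) ⊆ Finset.univ.filter fun i => w i = true := by
    intro r hr
    simp only [Finset.mem_insert, Finset.mem_singleton] at hr
    rcases hr with rfl | rfl <;> simp [hp, hq]
  rw [Finset.card_sdiff_of_subset hsub]
  have h2 : ({p, q} : Finset (Fin ℓ)).card = 2 := by
    rw [Finset.card_insert_of_notMem (by simp [hpq]), Finset.card_singleton]
  have hle := Finset.card_le_card hsub
  rw [h2] at hle ⊢
  omega


/-- for a blockwise symmetric matchgate signature with `rank M(Γ) ≥ 2`,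
a weight-minimal pair of linearly independent rows differs in exactly one bit. -/
theorem stmt2 (n ℓ : ℕ) (hn : 2 ≤ n) (hℓ : 1 ≤ ℓ)
    (Γ : (Fin n → Fin ℓ → Bool) → ℂ)
    (hsym : BlockSym Γ) (hpar : ParityCond Γ) (hmgi : MGI Γ)
    (hrank : 2 ≤ (matrixForm Γ).rank)
    (σ τ : Fin ℓ → Bool)
    (hind : LinearIndependent ℂ ![matrixForm Γ σ, matrixForm Γ τ])
    (hmin : ∀ u v : Fin ℓ → Bool,
      LinearIndependent ℂ ![matrixForm Γ u, matrixForm Γ v] →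
      wt (bxor σ τ) ≤ wt (bxor u v)) :
    wt (bxor σ τ) = 1 := by
  classical
  obtain ⟨m, rfl⟩ : ∃ m, n = m + 1 := ⟨n - 1, by omega⟩
  have hσ0 : matrixForm Γ σ ≠ 0 := by
    intro h
    obtain ⟨hs, -⟩ := LinearIndependent.pair_iff.mp hind 1 0 (by simp [h])
    exact one_ne_zero hs
  have hτ0 : matrixForm Γ τ ≠ 0 := by
    intro h
    obtain ⟨-, ht⟩ := LinearIndependent.pair_iff.mp hind 0 1 (by simp [h])
    exact one_ne_zero ht
  have hστ : σ ≠ τ := by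
    rintro rfl
    obtain ⟨hs, -⟩ := LinearIndependent.pair_iff.mp hind 1 (-1) (by simp)
    exact one_ne_zero hs
  have hd1 : 1 ≤ wt (bxor σ τ) := by
    obtain ⟨i, hi⟩ := Function.ne_iff.mp hστ
    apply Finset.card_pos.mpr
    refine ⟨i, Finset.mem_filter.mpr ⟨Finset.mem_univ _, ?_⟩⟩
    cases hσi : σ i <;> cases hτi : τ i <;> simp [bxor, hσi, hτi] <;>
      exact hi (by rw [hσi, hτi])
  by_contra hne1
  have hd2 : 2 ≤ wt (bxor σ τ) := by omega
  have H1 : ∀ p : Fin ℓ, matrixForm Γ (bxor σ (unit p)) = 0 := by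
    intro p
    by_contra h
    have hodd : (wt σ + wt (bxor σ (unit p))) % 2 = 1 := by
      rw [wt_parity, bxor_self_left, wt_unit]
    have hli := indep_of_odd Γ hpar σ (bxor σ (unit p)) hodd hσ0 h
    have hm2 := hmin σ (bxor σ (unit p)) hli
    rw [bxor_self_left, wt_unit] at hm2
    omega
  have hminor : ∀ (p1 p2 : Fin ℓ), p1 < p2 → ∀ β γ : Fin (m+1-1) → Fin ℓ → Bool,
      matrixForm Γ σ β * matrixForm Γ (bxor σ (bxor (unit p1) (unit p2))) γ =
      matrixForm Γ (bxor σ (bxor (unit p1) (unit p2))) β * matrixForm Γ σ γ := by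
    intro p1 p2 hlt β γ
    obtain ⟨Q, hQ, hQeq⟩ := exists_Q β γ
    have h := key_minor Γ hmgi σ H1 p1 p2 hlt β Q hQ
    rw [hQeq] at h
    exact h
  have hdep : ∀ (p1 p2 : Fin ℓ), p1 ≠ p2 →
      ∃ c : ℂ, matrixForm Γ (bxor σ (bxor (unit p1) (unit p2))) = c • matrixForm Γ σ := by
    intro p1 p2 hne
    rcases lt_or_gt_of_ne hne with hlt | hlt
    · exact rows_dep _ _ hσ0 (hminor p1 p2 hlt)
    · have hco : bxor σ (bxor (unit p2) (unit p1)) = bxor σ (bxor (unit p1) (unit p2)) := by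
        funext i
        simp [bxor, Bool.xor_comm]
      obtain ⟨c, hc⟩ := rows_dep _ _ hσ0 (hminor p2 p1 hlt)
      exact ⟨c, by rwa [hco] at hc⟩
  have hzero2 : ∀ p1 p2 : Fin ℓ, p1 ≠ p2 → (bxor σ τ) p1 = true → (bxor σ τ) p2 = true →
      matrixForm Γ (bxor σ (bxor (unit p1) (unit p2))) = 0 := by
    intro p1 p2 hne hp1 hp2
    obtain ⟨c, hc⟩ := hdep p1 p2 hne
    by_cases hc0 : c = 0
    · rwa [hc0, zero_smul] at hc
    · exfalso
      have hliuτ : LinearIndependent ℂ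
          ![matrixForm Γ (bxor σ (bxor (unit p1) (unit p2))), matrixForm Γ τ] := by
        rw [LinearIndependent.pair_iff]
        intro a b hab
        rw [hc, smul_smul] at hab
        obtain ⟨h1, h2⟩ := LinearIndependent.pair_iff.mp hind (a * c) b hab
        refine ⟨?_, h2⟩
        rcases mul_eq_zero.mp h1 with h | h
        · exact h
        · exact absurd h hc0
      have hd' := hmin _ _ hliuτ
      have hbeq : bxor (bxor σ (bxor (unit p1) (unit p2))) τ
          = fun i => Bool.xor (bxor σ τ i) (Bool.xor (decide (i = p1)) (decide (i = p2))) := by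
        funext i
        simp only [bxor, unit]
        cases σ i <;> cases τ i <;> cases decide (i = p1) <;> cases decide (i = p2) <;> rfl
      have hwt := wt_sub_two (bxor σ τ) p1 p2 hne hp1 hp2
      rw [hbeq] at hd'
      omega
  set D : Finset (Fin ℓ) := Finset.univ.filter (fun i => bxor σ τ i = true) with hD
  have hDcard : D.card = wt (bxor σ τ) := rfl
  have hDne : D.Nonempty := Finset.card_pos.mp (by omega)
  obtain ⟨p1, hp1⟩ := hDne
  have H2 : ∀ p ∈ D, p ≠ p1 → matrixForm Γ (bxor (bxor σ (unit p1)) (unit p)) = 0 := by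
    intro p hp hne
    have h := hzero2 p1 p (Ne.symm hne) (Finset.mem_filter.mp hp1).2 (Finset.mem_filter.mp hp).2
    have hassoc : bxor (bxor σ (unit p1)) (unit p) = bxor σ (bxor (unit p1) (unit p)) := by
      funext i
      simp [bxor, Bool.xor_assoc]
    rw [hassoc]
    exact h
  have hhead : (fun i => Bool.xor (σ i) (decide (i ∈ D))) = τ := by
    funext i
    have hdec : decide (i ∈ D) = bxor σ τ i := by
      by_cases h : bxor σ τ i = true
      · simp [hD, h]
      · simp only [Bool.not_eq_true] at h
        simp [hD, h]
    rw [hdec]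
    simp [bxor]
  obtain ⟨β0, hβ0⟩ := Function.ne_iff.mp hσ0
  simp only [Pi.zero_apply] at hβ0
  have hτzero : matrixForm Γ τ = 0 := by
    funext γ
    simp only [Pi.zero_apply]
    obtain ⟨Q, hQ, hQeq⟩ := exists_Q β0 γ
    have h := key_final Γ hmgi σ H1 D p1 hp1 H2 β0 Q hQ
    rw [hhead, hQeq] at h
    rcases mul_eq_zero.mp h with h | h
    · exact absurd h hβ0
    · exact h
  exact hτ0 hτzero


end Matchgate
end

section
/- Let n ≥ 2, ℓ ≥ 1, and let Γ : ({0,1}^ℓ)^n → ℂ be a blockwise symmetric matchgate signature of arity nℓ whose matrix form M(Γ) has rank at least 2. Suppose σ, τ ∈ {0,1}^ℓ are such that the rows M(Γ)^σ and M(Γ)^τ are linearly independent and wt(σ+τ) is minimal among all pairs of row indices whose rows are linearly independent. Fix t ∈ {1,…,n}, and for β = (β_1,…,β_{n−1}) ∈ ({0,1}^ℓ)^{n−1} set x_β = (Γ(β_1,…,β_{t−1},σ,β_t,…,β_{n−1}), Γ(β_1,…,β_{t−1},τ,β_t,…,β_{n−1})) ∈ ℂ². If ζ, η ∈ ({0,1}^ℓ)^{n−1}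 are such that x_ζ and x_η are linearly independent and wt(ζ+η) = min { wt(u+v) : x_u and x_v are linearly independent }, then wt(ζ+η) = 1. -/
open Finset

namespace Matchgate

section Aux
variable {m : ℕ}

lemma wt_bxor (a b : Fin m → Bool) :
    wt (bxor a b) = (univ.filter fun i => a i ≠ b i).card := by
  unfold wt bxor
  congr 1
  apply Finset.filter_congr
  intro i _
  cases a i <;> cases b i <;> simp

lemma wtB_diff {n ℓ : ℕ} (u v : Fin n → Fin ℓ → Bool) :
    wtB (bxorB u v) = (univ.filter fun p : Fin n × Fin ℓ => u p.1 p.2 ≠ v p.1 p.2).card := by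
  rw [Finset.card_filter, Fintype.sum_prod_type]
  unfold wtB
  apply Finset.sum_congr rfl
  intro j _
  show wt (bxor (u j) (v j)) = _
  rw [wt_bxor, Finset.card_filter]

lemma wt_le_of_subset (a : Fin m → Bool) (S : Finset (Fin m)) (h : ∀ i, a i = true → i ∈ S) :
    wt a ≤ S.card := by
  apply Finset.card_le_card
  intro i hi
  exact h i (Finset.mem_filter.mp hi).2

lemma wt_lt_of (σ τ c : Fin m → Bool) (hsub : ∀ i, c i ≠ τ i → σ i ≠ τ i)
    (i0 : Fin m) (h1 : σ i0 ≠ τ i0) (h2 : c i0 = τ i0) :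
    wt (bxor c τ) < wt (bxor σ τ) := by
  rw [wt_bxor, wt_bxor]
  apply Finset.card_lt_card
  constructor
  · intro i hi
    simp only [Finset.mem_filter, Finset.mem_univ, true_and] at hi ⊢
    exact hsub i hi
  · intro hsup
    have := hsup (Finset.mem_filter.mpr ⟨Finset.mem_univ i0, h1⟩)
    simp only [Finset.mem_filter] at this
    exact this.2 h2

lemma wtB_lt_of {n ℓ : ℕ} (u v w : Fin n → Fin ℓ → Bool)
    (hsub : ∀ k i, w k i ≠ v k i → u k i ≠ v k i)
    (k0 : Fin n) (i0 : Fin ℓ) (h1 : u k0 i0 ≠ v k0 i0) (h2 : w k0 i0 = v k0 i0) :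
    wtB (bxorB w v) < wtB (bxorB u v) := by
  rw [wtB_diff, wtB_diff]
  apply Finset.card_lt_card
  constructor
  · intro p hp
    simp only [Finset.mem_filter, Finset.mem_univ, true_and] at hp ⊢
    exact hsub p.1 p.2 hp
  · intro hsup
    have := hsup (Finset.mem_filter.mpr ⟨Finset.mem_univ (k0, i0), h1⟩)
    simp only [Finset.mem_filter] at this
    exact this.2 h2

lemma wtB_comm {n ℓ : ℕ} (u v : Fin n → Fin ℓ → Bool) :
    wtB (bxorB u v) = wtB (bxorB v u) := by
  rw [wtB_diff, wtB_diff]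
  congr 1
  apply Finset.filter_congr
  intro p _
  simp [ne_comm]

lemma wt_comm (u v : Fin m → Bool) : wt (bxor u v) = wt (bxor v u) := by
  rw [wt_bxor, wt_bxor]
  congr 1
  apply Finset.filter_congr
  intro p _
  simp [ne_comm]

lemma funext2 {f g : Fin 2 → ℂ} (h0 : f 0 = g 0) (h1 : f 1 = g 1) : f = g := by
  funext j
  fin_cases j
  · exact h0
  · exact h1

lemma not_indep_self {ι : Type*} (a : ι → ℂ) : ¬ LinearIndependent ℂ ![a, a] := by
  rw [LinearIndependent.pair_iff]
  push_neg
  exact ⟨1, -1, by simp, fun h => absurd h one_ne_zero⟩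

lemma mid_zero {ι : Type*} {a b c : ι → ℂ} (hab : LinearIndependent ℂ ![a, b])
    (h1 : ¬ LinearIndependent ℂ ![c, a]) (h2 : ¬ LinearIndependent ℂ ![c, b]) : c = 0 := by
  rw [LinearIndependent.pair_iff] at h1 h2
  push_neg at h1 h2
  obtain ⟨s, t, hst, hstne⟩ := h1
  obtain ⟨u, v, huv, huvne⟩ := h2
  have ha0 : a ≠ 0 := by
    intro h
    have := (LinearIndependent.pair_iff.mp hab 1 0 (by simp [h])).1
    exact one_ne_zero this
  have hb0 : b ≠ 0 := by
    intro h
    have := (LinearIndependent.pair_iff.mp hab 0 1 (by simp [h])).2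
    exact one_ne_zero this
  have hs : s ≠ 0 := by
    intro h
    subst h
    have ht := hstne rfl
    apply ha0
    have : t • a = 0 := by simpa using hst
    rcases smul_eq_zero.mp this with h | h
    · exact absurd h ht
    · exact h
  have hu : u ≠ 0 := by
    intro h
    subst h
    have hv := huvne rfl
    apply hb0
    have : v • b = 0 := by simpa using huv
    rcases smul_eq_zero.mp this with h | h
    · exact absurd h hv
    · exact h
  have key : (u * t) • a + (-(s * v)) • b = 0 := by
    funext j
    have e1 := congrFun hst j
    have e2 := congrFun huv j
    simp only [Pi.add_apply, Pi.smul_apply, Pi.zero_apply, smul_eq_mul] at e1 e2 ⊢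
    linear_combination u * e1 - s * e2
  obtain ⟨hut, hsv⟩ := LinearIndependent.pair_iff.mp hab _ _ key
  have ht : t = 0 := by
    rcases mul_eq_zero.mp hut with h | h
    · exact absurd h hu
    · exact h
  subst ht
  have : s • c = 0 := by simpa using hst
  rcases smul_eq_zero.mp this with h | h
  · exact absurd h hs
  · exact h

lemma det_ne {u v : Fin 2 → ℂ} (h : LinearIndependent ℂ ![u, v]) :
    u 0 * v 1 - u 1 * v 0 ≠ 0 := by
  intro hdet
  rw [LinearIndependent.pair_iff] at h
  have comb : ∀ s t : ℂ, s * u 0 + t * v 0 = 0 → s * u 1 + t * v 1 = 0 → s = 0 ∧ t = 0 := by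
    intro s t h0 h1
    apply h s t
    apply funext2 <;>
      simp only [Pi.add_apply, Pi.smul_apply, Pi.zero_apply, smul_eq_mul] <;> assumption
  by_cases hu0 : u 0 = 0
  · by_cases hu1 : u 1 = 0
    · exact one_ne_zero (comb 1 0 (by simp [hu0]) (by simp [hu1])).1
    · have := (comb (v 1) (-(u 1)) (by linear_combination hdet) (by ring)).2
      exact hu1 (neg_eq_zero.mp this)
  · have := (comb (v 0) (-(u 0)) (by ring) (by linear_combination -hdet)).2
    exact hu0 (neg_eq_zero.mp this)

end Aux

section Aux2
variable {n ℓ : ℕ}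

def idx (t j : Fin n) (h : (j:ℕ) ≠ (t:ℕ)) : Fin (n-1) :=
  if h2 : (j:ℕ) < (t:ℕ) then ⟨j, by have := t.isLt; omega⟩
  else ⟨(j:ℕ) - 1, by have := j.isLt; omega⟩

def embAt (t : Fin n) (k : Fin (n-1)) : Fin n :=
  if h : (k:ℕ) < (t:ℕ) then ⟨k, by have := t.isLt; omega⟩
  else ⟨(k:ℕ)+1, by have := k.isLt; omega⟩

lemma idx_val (t j : Fin n) (h : (j:ℕ) ≠ (t:ℕ)) :
    ((idx t j h : Fin (n-1)) : ℕ) = if (j:ℕ) < (t:ℕ) then (j:ℕ) else (j:ℕ)-1 := by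
  unfold idx; split_ifs <;> rfl

lemma emb_val (t : Fin n) (k : Fin (n-1)) :
    ((embAt t k : Fin n) : ℕ) = if (k:ℕ) < (t:ℕ) then (k:ℕ) else (k:ℕ)+1 := by
  unfold embAt; split_ifs <;> rfl

lemma embAt_ne (t : Fin n) (k : Fin (n-1)) : ((embAt t k : Fin n) : ℕ) ≠ (t:ℕ) := by
  rw [emb_val]; split_ifs <;> omega

lemma emb_idx (t j : Fin n) (h : (j:ℕ) ≠ (t:ℕ)) : embAt t (idx t j h) = j := by
  apply Fin.ext
  rw [emb_val, idx_val]
  split_ifs <;> omega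

lemma idx_emb (t : Fin n) (k : Fin (n-1)) (h : ((embAt t k : Fin n) : ℕ) ≠ (t:ℕ)) :
    idx t (embAt t k) h = k := by
  apply Fin.ext
  rw [idx_val, emb_val]
  have := k.isLt
  split_ifs <;> omega

lemma insertAt_t (t : Fin n) (c : Fin ℓ → Bool) (β : Fin (n-1) → Fin ℓ → Bool) :
    insertAt t c β t = c := by simp [insertAt]

lemma insertAt_ne (t : Fin n) (c : Fin ℓ → Bool) (β : Fin (n-1) → Fin ℓ → Bool)
    (j : Fin n) (h : (j:ℕ) ≠ (t:ℕ)) :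
    insertAt t c β j = β (idx t j h) := by
  unfold insertAt idx
  rw [dif_neg h]
  split_ifs <;> rfl

lemma insertAt_emb (t : Fin n) (c : Fin ℓ → Bool) (β : Fin (n-1) → Fin ℓ → Bool)
    (k : Fin (n-1)) : insertAt t c β (embAt t k) = β k := by
  rw [insertAt_ne t c β _ (embAt_ne t k), idx_emb]

lemma decide_pair_t {t j : Fin n} (h : (j:ℕ) ≠ (t:ℕ)) (i i1 : Fin ℓ) :
    (decide ((j,i) = (t,i1)) : Bool) = false := by
  apply decide_eq_false
  intro he
  exact h (congrArg Fin.val (congrArg Prod.fst he))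

lemma decide_pair_fst (t : Fin n) (i i1 : Fin ℓ) :
    (decide ((t,i) = (t,i1)) : Bool) = decide (i = i1) := by
  apply decide_eq_decide.mpr
  simp [Prod.ext_iff]

lemma decide_pair_ne_t {t : Fin n} {p : Fin n × Fin ℓ} (hp : ((p.1:Fin n):ℕ) ≠ (t:ℕ))
    {j : Fin n} (hj : (j:ℕ) ≠ (t:ℕ)) (i : Fin ℓ) :
    (decide ((j,i) = p) : Bool) = decide ((idx t j hj, i) = (idx t p.1 hp, p.2)) := by
  apply decide_eq_decide.mpr
  simp only [Prod.ext_iff, Fin.ext_iff, idx_val]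
  constructor <;> rintro ⟨h1, h2⟩ <;> refine ⟨?_, h2⟩ <;> split_ifs at * <;> omega

lemma xor_cancel (a b : Bool) : Bool.xor (Bool.xor a b) b = a := by
  revert a b; decide

lemma xor_mix (a b c : Bool) : Bool.xor (Bool.xor a b) (Bool.xor c b) = Bool.xor a c := by
  revert a b c; decide

lemma patT2 (t : Fin n) (c0 : Fin ℓ → Bool) (β0 : Fin (n-1) → Fin ℓ → Bool) (i1 i2 : Fin ℓ) :
    (fun j i => Bool.xor (Bool.xor (insertAt t c0 β0 j i)
        (decide ((j,i) = ((t,i1) : Fin n × Fin ℓ)))) (decide ((j,i) = ((t,i2) : Fin n × Fin ℓ)))) =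
      insertAt t (fun i => Bool.xor (Bool.xor (c0 i) (decide (i = i1))) (decide (i = i2))) β0 := by
  funext j i
  by_cases hj : (j:ℕ) = (t:ℕ)
  · have hjt : j = t := Fin.ext hj
    subst hjt
    rw [insertAt_t, insertAt_t, decide_pair_fst, decide_pair_fst]
  · rw [insertAt_ne t c0 β0 j hj, insertAt_ne t _ β0 j hj,
      decide_pair_t hj, decide_pair_t hj]
    simp

lemma patTN (t : Fin n) (c0 : Fin ℓ → Bool) (β0 : Fin (n-1) → Fin ℓ → Bool) (i1 : Fin ℓ)
    (p : Fin n × Fin ℓ) (hp : ((p.1 : Fin n):ℕ) ≠ (t:ℕ)) :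
    (fun j i => Bool.xor (Bool.xor (insertAt t c0 β0 j i)
        (decide ((j,i) = ((t,i1) : Fin n × Fin ℓ)))) (decide ((j,i) = p))) =
      insertAt t (fun i => Bool.xor (c0 i) (decide (i = i1)))
        (fun k i => Bool.xor (β0 k i) (decide ((k,i) = (idx t p.1 hp, p.2)))) := by
  funext j i
  by_cases hj : (j:ℕ) = (t:ℕ)
  · have hjt : j = t := Fin.ext hj
    subst hjt
    rw [insertAt_t, insertAt_t, decide_pair_fst]
    have hd : (decide ((j,i) = p) : Bool) = false := by
      apply decide_eq_false
      intro he
      exact hp (by rw [← he])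
    rw [hd, Bool.xor_false]
  · rw [insertAt_ne t c0 β0 j hj, insertAt_ne t _ _ j hj,
      decide_pair_t hj, decide_pair_ne_t hp hj]
    simp

lemma gamma_insertAt {Γ : (Fin n → Fin ℓ → Bool) → ℂ} (hsym : BlockSym Γ)
    (t : Fin n) (c : Fin ℓ → Bool) (β : Fin (n-1) → Fin ℓ → Bool) :
    Γ (insertAt t c β) = matrixForm Γ c β := by
  have h0n : 0 < n := t.pos
  let π : Equiv.Perm (Fin n) :=
    { toFun := fun j => if (j:ℕ) = (t:ℕ) then ⟨0, h0n⟩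
        else if h2 : (j:ℕ) < (t:ℕ) then ⟨(j:ℕ)+1, by have := t.isLt; omega⟩ else j
      invFun := fun k => if (k:ℕ) = 0 then t
        else if h2 : (k:ℕ) ≤ (t:ℕ) then ⟨(k:ℕ)-1, by have := k.isLt; omega⟩ else k
      left_inv := by
        intro j
        simp only []
        split_ifs <;> simp_all [Fin.ext_iff] <;> omega
      right_inv := by
        intro k
        simp only []
        split_ifs <;> simp_all [Fin.ext_iff] <;> omega }
  have hπ : ∀ j : Fin n, π j = if (j:ℕ) = (t:ℕ) then ⟨0, h0n⟩
      else if h2 : (j:ℕ) < (t:ℕ) then ⟨(j:ℕ)+1, by have := t.isLt; omega⟩ else j := fun j => rfl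
  have hcomp : (cons0 c β) ∘ π = insertAt t c β := by
    funext j
    show cons0 c β (π j) = insertAt t c β j
    rw [hπ]
    by_cases h1 : (j:ℕ) = (t:ℕ)
    · rw [if_pos h1]
      have hjt : j = t := Fin.ext h1
      subst hjt
      rw [insertAt_t]
      unfold cons0
      rw [dif_pos (by simp)]
    · rw [if_neg h1, insertAt_ne t c β j h1]
      by_cases h2 : (j:ℕ) < (t:ℕ)
      · rw [dif_pos h2]
        unfold cons0
        rw [dif_neg (by simp)]
        refine congrArg β (Fin.ext ?_)
        rw [idx_val]
        simp only [Fin.val_mk]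
        rw [if_pos h2]
        omega
      · rw [dif_neg h2]
        unfold cons0
        rw [dif_neg (by omega)]
        refine congrArg β (Fin.ext ?_)
        rw [idx_val]
        simp only [Fin.val_mk]
        rw [if_neg h2]
  calc Γ (insertAt t c β) = Γ ((cons0 c β) ∘ π) := by rw [hcomp]
    _ = Γ (cons0 c β) := hsym π (cons0 c β)

end Aux2


section Aux3
variable {m : ℕ}

lemma xor_shuffle (a b c d : Bool) :
    Bool.xor (Bool.xor a b) (Bool.xor c d) = Bool.xor (Bool.xor (Bool.xor a c) b) d := by
  revert a b c d; decide

lemma wtB_card {n ℓ : ℕ} (a : Fin n → Fin ℓ → Bool) :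
    wtB a = (univ.filter fun p : Fin n × Fin ℓ => a p.1 p.2 = true).card := by
  rw [Finset.card_filter, Fintype.sum_prod_type]
  unfold wtB
  apply Finset.sum_congr rfl
  intro j _
  rw [wt, Finset.card_filter]

lemma wtB_le_of_subset {n ℓ : ℕ} (a : Fin n → Fin ℓ → Bool) (S : Finset (Fin n × Fin ℓ))
    (h : ∀ p : Fin n × Fin ℓ, a p.1 p.2 = true → p ∈ S) : wtB a ≤ S.card := by
  rw [wtB_card]
  exact Finset.card_le_card fun p hp => h p (Finset.mem_filter.mp hp).2

lemma flip1_lt (σ τ : Fin m → Bool) (i1 : Fin m) (h1 : σ i1 ≠ τ i1)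
    (hs : 2 ≤ wt (bxor σ τ)) :
    wt (bxor (fun i => Bool.xor (σ i) (decide (i = i1))) σ) < wt (bxor σ τ) ∧
    wt (bxor (fun i => Bool.xor (σ i) (decide (i = i1))) τ) < wt (bxor σ τ) := by
  constructor
  · have hle : wt (bxor (fun i => Bool.xor (σ i) (decide (i = i1))) σ) ≤
        ({i1} : Finset (Fin m)).card := by
      apply wt_le_of_subset
      intro i hi
      simp only [Finset.mem_singleton]
      by_contra hne
      simp [bxor, hne] at hi
    have : ({i1} : Finset (Fin m)).card = 1 := Finset.card_singleton i1
    omega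
  · apply wt_lt_of σ τ _ ?_ i1 h1 ?_
    · intro i hi
      by_cases h : i = i1
      · subst h
        exfalso
        apply hi
        cases hσ : σ i <;> cases hτ : τ i <;> simp_all [bxor]
      · simpa [h] using hi
    · cases hσ : σ i1 <;> cases hτ : τ i1 <;> simp_all

lemma flip2_lt (σ τ : Fin m → Bool) (i1 i2 : Fin m) (h1 : σ i1 ≠ τ i1) (h2 : σ i2 ≠ τ i2)
    (hne : i1 ≠ i2) (hs : 3 ≤ wt (bxor σ τ)) :
    wt (bxor (fun i => Bool.xor (Bool.xor (σ i) (decide (i = i1))) (decide (i = i2))) σ)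
        < wt (bxor σ τ) ∧
    wt (bxor (fun i => Bool.xor (Bool.xor (σ i) (decide (i = i1))) (decide (i = i2))) τ)
        < wt (bxor σ τ) := by
  constructor
  · have hle : wt (bxor (fun i => Bool.xor (Bool.xor (σ i) (decide (i = i1))) (decide (i = i2))) σ) ≤
        ({i1, i2} : Finset (Fin m)).card := by
      apply wt_le_of_subset
      intro i hi
      simp only [Finset.mem_insert, Finset.mem_singleton]
      by_contra hn
      push_neg at hn
      simp [bxor, hn.1, hn.2] at hi
    have hc : ({i1, i2} : Finset (Fin m)).card ≤ 2 := by
      apply le_trans (Finset.card_insert_le i1 {i2})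
      simp
    omega
  · apply wt_lt_of σ τ _ ?_ i1 h1 ?_
    · intro i hi
      by_cases ha : i = i1
      · subst ha
        exfalso
        apply hi
        cases hσ : σ i <;> cases hτ : τ i <;> simp_all [bxor, hne]
      · by_cases hb : i = i2
        · subst hb
          exfalso
          apply hi
          cases hσ : σ i <;> cases hτ : τ i <;> simp_all [bxor, Ne.symm hne]
        · simpa [ha, hb] using hi
    · cases hσ : σ i1 <;> cases hτ : τ i1 <;> simp_all [hne]

lemma colflip_lt {n ℓ : ℕ} (ζ η : Fin n → Fin ℓ → Bool) (k0 : Fin n) (i0 : Fin ℓ)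
    (h : ζ k0 i0 ≠ η k0 i0) (hd : 2 ≤ wtB (bxorB ζ η)) :
    wtB (bxorB (fun k i => Bool.xor (ζ k i) (decide ((k,i) = (k0,i0)))) ζ) < wtB (bxorB ζ η) ∧
    wtB (bxorB (fun k i => Bool.xor (ζ k i) (decide ((k,i) = (k0,i0)))) η) < wtB (bxorB ζ η) := by
  constructor
  · have hle : wtB (bxorB (fun k i => Bool.xor (ζ k i) (decide ((k,i) = (k0,i0)))) ζ) ≤
        ({(k0,i0)} : Finset (Fin n × Fin ℓ)).card := by
      apply wtB_le_of_subset
      intro p hp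
      simp only [Finset.mem_singleton]
      by_contra hne
      simp [bxorB, bxor, Prod.mk.eta, hne] at hp
    have : ({(k0,i0)} : Finset (Fin n × Fin ℓ)).card = 1 := rfl
    omega
  · apply wtB_lt_of ζ η _ ?_ k0 i0 h ?_
    · intro k i hi
      by_cases hki : (k, i) = (k0, i0)
      · rw [Prod.mk.injEq] at hki
        obtain ⟨rfl, rfl⟩ := hki
        exfalso
        apply hi
        cases hζ : ζ k i <;> cases hη : η k i <;> simp_all
      · simpa [hki] using hi
    · cases hζ : ζ k0 i0 <;> cases hη : η k0 i0 <;> simp_all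

lemma xor_ne (a b : Bool) (h : a ≠ b) : Bool.xor a true = b := by
  revert a b; decide

lemma key_two (c1 c2 : ℕ) (A B C D : ℂ) (h : c2 = c1 + 1)
    (hsum : (-1:ℂ)^c1 * A * B + (-1:ℂ)^c2 * D * C = 0) : A * B - D * C = 0 := by
  subst h
  rw [pow_succ] at hsum
  have h1 : (-1:ℂ)^c1 * (A*B - D*C) = 0 := by linear_combination hsum
  rcases mul_eq_zero.mp h1 with h2 | h2
  · exact absurd h2 (pow_ne_zero _ (by norm_num))
  · exact h2

end Aux3

/-- with `σ, τ` as in Statement 2 and `x_β = (Γ(⋯σ⋯), Γ(⋯τ⋯))` (the chosen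
block inserted in position `t`), a weight-minimal pair `ζ, η` with `x_ζ, x_η` linearly
independent differs in exactly one bit. -/
theorem stmt3 (n ℓ : ℕ) (hn : 2 ≤ n) (hℓ : 1 ≤ ℓ)
    (Γ : (Fin n → Fin ℓ → Bool) → ℂ)
    (hsym : BlockSym Γ) (hpar : ParityCond Γ) (hmgi : MGI Γ)
    (hrank : 2 ≤ (matrixForm Γ).rank)
    (σ τ : Fin ℓ → Bool)
    (hind : LinearIndependent ℂ ![matrixForm Γ σ, matrixForm Γ τ])
    (hmin : ∀ u v : Fin ℓ → Bool,
      LinearIndependent ℂ ![matrixForm Γ u, matrixForm Γ v] →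
      wt (bxor σ τ) ≤ wt (bxor u v))
    (t : Fin n)
    (x : (Fin (n - 1) → Fin ℓ → Bool) → Fin 2 → ℂ)
    (hx : ∀ β, x β = ![Γ (insertAt t σ β), Γ (insertAt t τ β)])
    (ζ η : Fin (n - 1) → Fin ℓ → Bool)
    (hζη : LinearIndependent ℂ ![x ζ, x η])
    (hmin2 : ∀ u v : Fin (n - 1) → Fin ℓ → Bool,
      LinearIndependent ℂ ![x u, x v] → wtB (bxorB ζ η) ≤ wtB (bxorB u v)) :
    wtB (bxorB ζ η) = 1 := by
  classical
  have hME : ∀ (c : Fin ℓ → Bool) (β : Fin (n-1) → Fin ℓ → Bool),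
      Γ (insertAt t c β) = matrixForm Γ c β := fun c β => gamma_insertAt hsym t c β
  have e0 : ∀ β, x β 0 = Γ (insertAt t σ β) := by intro β; rw [hx]; simp
  have e1 : ∀ β, x β 1 = Γ (insertAt t τ β) := by intro β; rw [hx]; simp
  have rowzero : ∀ c : Fin ℓ → Bool, wt (bxor c σ) < wt (bxor σ τ) →
      wt (bxor c τ) < wt (bxor σ τ) → ∀ β, Γ (insertAt t c β) = 0 := by
    intro c h1 h2 β
    have hz : matrixForm Γ c = 0 := by
      apply mid_zero hind
      · intro hli; have := hmin c σ hli; omega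
      · intro hli; have := hmin c τ hli; omega
    rw [hME]
    exact congrFun hz β
  have colzero : ∀ u : Fin (n-1) → Fin ℓ → Bool,
      wtB (bxorB u ζ) < wtB (bxorB ζ η) → wtB (bxorB u η) < wtB (bxorB ζ η) → x u = 0 := by
    intro u h1 h2
    apply mid_zero hζη
    · intro hli; have := hmin2 u ζ hli; omega
    · intro hli; have := hmin2 u η hli; omega
  have hστ : σ ≠ τ := by rintro rfl; exact not_indep_self _ hind
  have hζηne : ζ ≠ η := by rintro rfl; exact not_indep_self _ hζη
  obtain ⟨i1, hi1⟩ : ∃ i, σ i ≠ τ i := by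
    by_contra hc; push_neg at hc; exact hστ (funext hc)
  have hs1 : 1 ≤ wt (bxor σ τ) := by
    rw [wt_bxor]
    exact Finset.card_pos.mpr ⟨i1, Finset.mem_filter.mpr ⟨Finset.mem_univ _, hi1⟩⟩
  by_contra hne1
  have hd1 : 1 ≤ wtB (bxorB ζ η) := by
    obtain ⟨k0, i0, hki⟩ : ∃ k i, ζ k i ≠ η k i := by
      by_contra hc; push_neg at hc
      exact hζηne (funext fun k => funext fun i => hc k i)
    rw [wtB_diff]
    exact Finset.card_pos.mpr ⟨(k0,i0), Finset.mem_filter.mpr ⟨Finset.mem_univ _, hki⟩⟩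
  have hd2 : 2 ≤ wtB (bxorB ζ η) := by omega
  set P : Finset (Fin n × Fin ℓ) :=
    univ.filter (fun p => insertAt t σ ζ p.1 p.2 ≠ insertAt t τ η p.1 p.2) with hPdef
  have hPmem : ∀ p : Fin n × Fin ℓ,
      p ∈ P ↔ insertAt t σ ζ p.1 p.2 ≠ insertAt t τ η p.1 p.2 := by
    intro p; rw [hPdef]; simp
  have hPt : ∀ i : Fin ℓ, (((t,i) : Fin n × Fin ℓ) ∈ P) ↔ σ i ≠ τ i := by
    intro i
    rw [hPmem]
    simp [insertAt_t]
  have hPnt : ∀ p ∈ P, ∀ hpn : ((p.1 : Fin n) : ℕ) ≠ (t:ℕ),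
      ζ (idx t p.1 hpn) p.2 ≠ η (idx t p.1 hpn) p.2 := by
    intro p hp hpn
    rw [hPmem] at hp
    rwa [insertAt_ne t σ ζ p.1 hpn, insertAt_ne t τ η p.1 hpn] at hp
  have hxorP : ∀ j i, Bool.xor (insertAt t σ ζ j i) (decide ((j,i) ∈ P)) = insertAt t τ η j i := by
    intro j i
    by_cases h : insertAt t σ ζ j i = insertAt t τ η j i
    · have hnot : ((j,i) : Fin n × Fin ℓ) ∉ P := by rw [hPmem]; exact fun hh => hh h
      rw [decide_eq_false hnot, Bool.xor_false]; exact h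
    · have hin : ((j,i) : Fin n × Fin ℓ) ∈ P := (hPmem _).mpr h
      rw [decide_eq_true hin]
      exact xor_ne _ _ h
  have hsame : ∀ j i, (insertAt t σ η j i = insertAt t τ ζ j i) ↔
      (insertAt t σ ζ j i = insertAt t τ η j i) := by
    intro j i
    by_cases hj : (j:ℕ) = (t:ℕ)
    · have hjt : j = t := Fin.ext hj
      subst hjt
      rw [insertAt_t, insertAt_t, insertAt_t, insertAt_t]
    · rw [insertAt_ne t σ η j hj, insertAt_ne t τ ζ j hj,
        insertAt_ne t σ ζ j hj, insertAt_ne t τ η j hj]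
      exact eq_comm
  have hxorP' : ∀ j i, Bool.xor (insertAt t σ η j i) (decide ((j,i) ∈ P)) = insertAt t τ ζ j i := by
    intro j i
    by_cases h : insertAt t σ η j i = insertAt t τ ζ j i
    · have hnot : ((j,i) : Fin n × Fin ℓ) ∉ P := by
        rw [hPmem]; intro hh; exact hh ((hsame j i).mp h)
      rw [decide_eq_false hnot, Bool.xor_false]; exact h
    · have hin : ((j,i) : Fin n × Fin ℓ) ∈ P :=
        (hPmem _).mpr (fun hAB => h ((hsame j i).mpr hAB))
      rw [decide_eq_true hin]
      exact xor_ne _ _ h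
  have hxorP'' : ∀ j i, Bool.xor (insertAt t τ ζ j i) (decide ((j,i) ∈ P)) = insertAt t σ η j i := by
    intro j i
    rw [← hxorP' j i, xor_cancel]
  have hPB : (fun j i => Bool.xor (insertAt t σ ζ j i) (decide ((j,i) ∈ P))) = insertAt t τ η := by
    funext j i; exact hxorP j i
  have hPD : (fun j i => Bool.xor (insertAt t σ η j i) (decide ((j,i) ∈ P))) = insertAt t τ ζ := by
    funext j i; exact hxorP' j i
  have hPC : (fun j i => Bool.xor (insertAt t τ ζ j i) (decide ((j,i) ∈ P))) = insertAt t σ η := by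
    funext j i; exact hxorP'' j i
  have hMGIapp : ∀ (c0 : Fin ℓ → Bool) (β0 : Fin (n-1) → Fin ℓ → Bool) (i1' : Fin ℓ),
      ∑ p ∈ P, (-1:ℂ) ^ (P.filter fun q => q.1 < p.1 ∨ (q.1 = p.1 ∧ q.2 ≤ p.2)).card *
        Γ (fun j i => Bool.xor (Bool.xor (insertAt t c0 β0 j i)
            (decide ((j,i) = ((t,i1') : Fin n × Fin ℓ)))) (decide ((j,i) = p))) *
        Γ (fun j i => Bool.xor (Bool.xor (insertAt t c0 β0 j i)
            (decide ((j,i) = ((t,i1') : Fin n × Fin ℓ))))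
            (Bool.xor (decide ((j,i) ∈ P)) (decide ((j,i) = p)))) = 0 := by
    intro c0 β0 i1'
    exact hmgi (fun j i => Bool.xor (insertAt t c0 β0 j i)
      (decide ((j,i) = ((t,i1') : Fin n × Fin ℓ)))) P
  have single : ∀ (c0 : Fin ℓ → Bool) (β0 : Fin (n-1) → Fin ℓ → Bool) (i1' : Fin ℓ),
      ((t,i1') : Fin n × Fin ℓ) ∈ P →
      (∀ p ∈ P, p ≠ ((t,i1') : Fin n × Fin ℓ) →
        Γ (fun j i => Bool.xor (Bool.xor (insertAt t c0 β0 j i)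
            (decide ((j,i) = ((t,i1') : Fin n × Fin ℓ)))) (decide ((j,i) = p))) = 0) →
      Γ (insertAt t c0 β0) *
        Γ (fun j i => Bool.xor (insertAt t c0 β0 j i) (decide ((j,i) ∈ P))) = 0 := by
    intro c0 β0 i1' hq1 hothers
    have hsum := hMGIapp c0 β0 i1'
    have hz : ∀ p ∈ P, p ≠ ((t,i1') : Fin n × Fin ℓ) →
        (-1:ℂ) ^ (P.filter fun q => q.1 < p.1 ∨ (q.1 = p.1 ∧ q.2 ≤ p.2)).card *
          Γ (fun j i => Bool.xor (Bool.xor (insertAt t c0 β0 j i)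
              (decide ((j,i) = ((t,i1') : Fin n × Fin ℓ)))) (decide ((j,i) = p))) *
          Γ (fun j i => Bool.xor (Bool.xor (insertAt t c0 β0 j i)
              (decide ((j,i) = ((t,i1') : Fin n × Fin ℓ))))
              (Bool.xor (decide ((j,i) ∈ P)) (decide ((j,i) = p)))) = 0 := by
      intro p hp hne
      rw [hothers p hp hne, mul_zero, zero_mul]
    rw [Finset.sum_eq_single_of_mem _ hq1 hz] at hsum
    have hF : (fun j i => Bool.xor (Bool.xor (insertAt t c0 β0 j i)
        (decide ((j,i) = ((t,i1') : Fin n × Fin ℓ))))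
        (decide ((j,i) = ((t,i1') : Fin n × Fin ℓ)))) = insertAt t c0 β0 := by
      funext j i; exact xor_cancel _ _
    have hG : (fun j i => Bool.xor (Bool.xor (insertAt t c0 β0 j i)
        (decide ((j,i) = ((t,i1') : Fin n × Fin ℓ))))
        (Bool.xor (decide ((j,i) ∈ P)) (decide ((j,i) = ((t,i1') : Fin n × Fin ℓ))))) =
        (fun j i => Bool.xor (insertAt t c0 β0 j i) (decide ((j,i) ∈ P))) := by
      funext j i; exact xor_mix _ _ _
    rw [hF, hG] at hsum
    rcases mul_eq_zero.mp hsum with h | h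
    · rcases mul_eq_zero.mp h with h' | h'
      · exact absurd h' (pow_ne_zero _ (by norm_num))
      · rw [h', zero_mul]
    · rw [h, mul_zero]
  have hblockt : ∀ p ∈ P, ((p.1:Fin n):ℕ) = (t:ℕ) →
      p = ((t, p.2) : Fin n × Fin ℓ) ∧ σ p.2 ≠ τ p.2 := by
    intro p hp hq
    have hp1 : p.1 = t := Fin.ext hq
    refine ⟨Prod.ext_iff.mpr ⟨hp1, rfl⟩, ?_⟩
    have hmem := (hPmem p).mp hp
    rw [hp1, insertAt_t, insertAt_t] at hmem
    exact hmem
  rcases Nat.lt_or_ge (wt (bxor σ τ)) 2 with hs | hs2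
  · -- s = 1
    have hone : wt (bxor σ τ) = 1 := by omega
    obtain ⟨a, ha⟩ := Finset.card_eq_one.mp (by rw [← wt_bxor]; exact hone)
    have hia : i1 = a := by
      have hmem : i1 ∈ univ.filter (fun i => σ i ≠ τ i) :=
        Finset.mem_filter.mpr ⟨Finset.mem_univ _, hi1⟩
      rw [ha] at hmem
      exact Finset.mem_singleton.mp hmem
    have hfil : univ.filter (fun i => σ i ≠ τ i) = {i1} := by rw [ha, hia]
    have huniq : ∀ i, σ i ≠ τ i → i = i1 := by
      intro i hi
      have hmem : i ∈ univ.filter (fun i => σ i ≠ τ i) :=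
        Finset.mem_filter.mpr ⟨Finset.mem_univ _, hi⟩
      rw [hfil] at hmem
      exact Finset.mem_singleton.mp hmem
    have hτform : (fun i => Bool.xor (σ i) (decide (i = i1))) = τ := by
      funext i
      by_cases h : i = i1
      · rw [h]
        have hd : (decide (i1 = i1) : Bool) = true := by simp
        rw [hd]
        exact xor_ne _ _ hi1
      · have heq : σ i = τ i := by by_contra hc; exact h (huniq i hc)
        simp [h, heq]
    have hptne : ∀ p ∈ P, p ≠ ((t,i1) : Fin n × Fin ℓ) → ((p.1:Fin n):ℕ) ≠ (t:ℕ) := by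
      intro p hp hne hq
      obtain ⟨hpe, hp2⟩ := hblockt p hp hq
      exact hne (by rw [hpe, huniq p.2 hp2])
    have hAB : Γ (insertAt t σ ζ) * Γ (insertAt t τ η) = 0 := by
      have hh := single σ ζ i1 ((hPt i1).mpr hi1) ?_
      · rwa [hPB] at hh
      · intro p hp hne
        have hpt := hptne p hp hne
        rw [patTN t σ ζ i1 p hpt, hτform]
        have hcol := colflip_lt ζ η (idx t p.1 hpt) p.2 (hPnt p hp hpt) hd2
        have hzz := colzero _ hcol.1 hcol.2
        have h2 := congrFun hzz 1
        rw [e1] at h2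
        simpa using h2
    have hCD : Γ (insertAt t σ η) * Γ (insertAt t τ ζ) = 0 := by
      have hh := single σ η i1 ((hPt i1).mpr hi1) ?_
      · rwa [hPD] at hh
      · intro p hp hne
        have hpt := hptne p hp hne
        rw [patTN t σ η i1 p hpt, hτform]
        have hki := hPnt p hp hpt
        have hcol := colflip_lt η ζ (idx t p.1 hpt) p.2 (Ne.symm hki)
          (by rw [wtB_comm]; exact hd2)
        rw [wtB_comm η ζ] at hcol
        have hzz := colzero _ hcol.2 hcol.1
        have h2 := congrFun hzz 1
        rw [e1] at h2
        simpa using h2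
    refine det_ne hζη ?_
    rw [e0 ζ, e1 η, e1 ζ, e0 η]
    linear_combination hAB - hCD
  · rcases Nat.lt_or_ge (wt (bxor σ τ)) 3 with hs | hs3
    · -- s = 2
      have hs2e : wt (bxor σ τ) = 2 := by omega
      obtain ⟨a, b, hab, hfab⟩ := Finset.card_eq_two.mp (by rw [← wt_bxor]; exact hs2e)
      have main2 : ∀ u v : Fin ℓ, u < v →
          univ.filter (fun i => σ i ≠ τ i) = {u, v} → False := by
        intro u v huv hfil
        have hu : σ u ≠ τ u := by
          have hmem : u ∈ univ.filter (fun i => σ i ≠ τ i) := by rw [hfil]; simp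
          exact (Finset.mem_filter.mp hmem).2
        have hv : σ v ≠ τ v := by
          have hmem : v ∈ univ.filter (fun i => σ i ≠ τ i) := by rw [hfil]; simp
          exact (Finset.mem_filter.mp hmem).2
        have huniq2 : ∀ i, σ i ≠ τ i → i = u ∨ i = v := by
          intro i hi
          have hmem : i ∈ ({u,v} : Finset (Fin ℓ)) := by
            rw [← hfil]
            exact Finset.mem_filter.mpr ⟨Finset.mem_univ _, hi⟩
          simpa using hmem
        have hne_uv : u ≠ v := ne_of_lt huv
        have hτ2 : (fun i => Bool.xor (Bool.xor (σ i) (decide (i = u))) (decide (i = v))) = τ := by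
          funext i
          by_cases h1 : i = u
          · rw [h1]
            have hd1 : (decide (u = u) : Bool) = true := by simp
            have hd2 : (decide (u = v) : Bool) = false := by simp [hne_uv]
            rw [hd1, hd2, Bool.xor_false]
            exact xor_ne _ _ hu
          · by_cases h2 : i = v
            · rw [h2]
              have hd1 : (decide (v = u) : Bool) = false := by simp [Ne.symm hne_uv]
              have hd2 : (decide (v = v) : Bool) = true := by simp
              rw [hd1, hd2, Bool.xor_false]
              exact xor_ne _ _ hv
            · have heq : σ i = τ i := by
                by_contra hc
                rcases huniq2 i hc with rfl | rfl
                · exact h1 rfl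
                · exact h2 rfl
              simp [h1, h2, heq]
        have hσ2 : (fun i => Bool.xor (Bool.xor (τ i) (decide (i = u))) (decide (i = v))) = σ := by
          funext i
          have he := congrFun hτ2 i
          rw [← he]
          generalize σ i = aa
          generalize (decide (i = u) : Bool) = b1
          generalize (decide (i = v) : Bool) = b2
          revert aa b1 b2; decide
        have hq1 : ((t,u) : Fin n × Fin ℓ) ∈ P := (hPt u).mpr hu
        have hq2 : ((t,v) : Fin n × Fin ℓ) ∈ P := (hPt v).mpr hv
        have hq12 : ((t,u) : Fin n × Fin ℓ) ≠ ((t,v) : Fin n × Fin ℓ) := by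
          simp [Prod.ext_iff, hne_uv]
        have hsum := hMGIapp σ ζ u
        have hsub : ({((t,u) : Fin n × Fin ℓ), ((t,v) : Fin n × Fin ℓ)} : Finset (Fin n × Fin ℓ)) ⊆ P := by
          intro q hq
          rcases Finset.mem_insert.mp hq with rfl | hq'
          · exact hq1
          · rw [Finset.mem_singleton.mp hq']; exact hq2
        have hz : ∀ p ∈ P, p ∉ ({((t,u) : Fin n × Fin ℓ), ((t,v) : Fin n × Fin ℓ)} : Finset (Fin n × Fin ℓ)) →
            (-1:ℂ) ^ (P.filter fun q => q.1 < p.1 ∨ (q.1 = p.1 ∧ q.2 ≤ p.2)).card *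
              Γ (fun j i => Bool.xor (Bool.xor (insertAt t σ ζ j i)
                  (decide ((j,i) = ((t,u) : Fin n × Fin ℓ)))) (decide ((j,i) = p))) *
              Γ (fun j i => Bool.xor (Bool.xor (insertAt t σ ζ j i)
                  (decide ((j,i) = ((t,u) : Fin n × Fin ℓ))))
                  (Bool.xor (decide ((j,i) ∈ P)) (decide ((j,i) = p)))) = 0 := by
          intro p hp hnotin
          have hpt : ((p.1:Fin n):ℕ) ≠ (t:ℕ) := by
            intro hq
            apply hnotin
            obtain ⟨hpe, hp2⟩ := hblockt p hp hq
            rcases huniq2 p.2 hp2 with h2 | h2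
            · exact Finset.mem_insert.mpr (Or.inl (by rw [hpe, h2]))
            · exact Finset.mem_insert.mpr (Or.inr (Finset.mem_singleton.mpr (by rw [hpe, h2])))
          rw [patTN t σ ζ u p hpt]
          have hb := flip1_lt σ τ u hu (by omega)
          rw [rowzero _ hb.1 hb.2 _, mul_zero, zero_mul]
        have hpair := Finset.sum_subset hsub hz
        rw [← hpair, Finset.sum_pair hq12] at hsum
        have hFq1 : (fun j i => Bool.xor (Bool.xor (insertAt t σ ζ j i)
            (decide ((j,i) = ((t,u) : Fin n × Fin ℓ))))
            (decide ((j,i) = ((t,u) : Fin n × Fin ℓ)))) = insertAt t σ ζ := by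
          funext j i; exact xor_cancel _ _
        have hGq1 : (fun j i => Bool.xor (Bool.xor (insertAt t σ ζ j i)
            (decide ((j,i) = ((t,u) : Fin n × Fin ℓ))))
            (Bool.xor (decide ((j,i) ∈ P)) (decide ((j,i) = ((t,u) : Fin n × Fin ℓ))))) =
            insertAt t τ η := by
          funext j i; rw [xor_mix]; exact hxorP j i
        have hFq2 : (fun j i => Bool.xor (Bool.xor (insertAt t σ ζ j i)
            (decide ((j,i) = ((t,u) : Fin n × Fin ℓ))))
            (decide ((j,i) = ((t,v) : Fin n × Fin ℓ)))) = insertAt t τ ζ := by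
          rw [patT2 t σ ζ u v, hτ2]
        have hGq2 : (fun j i => Bool.xor (Bool.xor (insertAt t σ ζ j i)
            (decide ((j,i) = ((t,u) : Fin n × Fin ℓ))))
            (Bool.xor (decide ((j,i) ∈ P)) (decide ((j,i) = ((t,v) : Fin n × Fin ℓ))))) =
            insertAt t σ η := by
          have h1 : (fun (j : Fin n) (i : Fin ℓ) => Bool.xor (Bool.xor (insertAt t σ ζ j i)
              (decide ((j,i) = ((t,u) : Fin n × Fin ℓ))))
              (Bool.xor (decide ((j,i) ∈ P)) (decide ((j,i) = ((t,v) : Fin n × Fin ℓ))))) =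
              (fun j i => Bool.xor (Bool.xor (insertAt t τ η j i)
              (decide ((j,i) = ((t,u) : Fin n × Fin ℓ))))
              (decide ((j,i) = ((t,v) : Fin n × Fin ℓ)))) := by
            funext j i
            rw [xor_shuffle, hxorP j i]
          rw [h1, patT2 t τ η u v, hσ2]
        rw [hFq1, hGq1, hFq2, hGq2] at hsum
        have hcnt : (P.filter fun q => q.1 < ((t,v) : Fin n × Fin ℓ).1 ∨
              (q.1 = ((t,v) : Fin n × Fin ℓ).1 ∧ q.2 ≤ ((t,v) : Fin n × Fin ℓ).2)).card =
            (P.filter fun q => q.1 < ((t,u) : Fin n × Fin ℓ).1 ∨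
              (q.1 = ((t,u) : Fin n × Fin ℓ).1 ∧ q.2 ≤ ((t,u) : Fin n × Fin ℓ).2)).card + 1 := by
          have hset : P.filter (fun q => q.1 < ((t,v) : Fin n × Fin ℓ).1 ∨
                (q.1 = ((t,v) : Fin n × Fin ℓ).1 ∧ q.2 ≤ ((t,v) : Fin n × Fin ℓ).2)) =
              insert ((t,v) : Fin n × Fin ℓ) (P.filter (fun q => q.1 < ((t,u) : Fin n × Fin ℓ).1 ∨
                (q.1 = ((t,u) : Fin n × Fin ℓ).1 ∧ q.2 ≤ ((t,u) : Fin n × Fin ℓ).2))) := by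
            ext q
            simp only [Finset.mem_filter, Finset.mem_insert]
            constructor
            · rintro ⟨hqP, hcond⟩
              rcases hcond with hlt | ⟨heq, hle⟩
              · exact Or.inr ⟨hqP, Or.inl hlt⟩
              · have hq2' : σ q.2 ≠ τ q.2 := by
                  have hmem := (hPmem q).mp hqP
                  rw [heq, insertAt_t, insertAt_t] at hmem
                  exact hmem
                rcases huniq2 q.2 hq2' with h2 | h2
                · exact Or.inr ⟨hqP, Or.inr ⟨heq, by rw [h2]⟩⟩
                · exact Or.inl (Prod.ext_iff.mpr ⟨heq, h2⟩)
            · rintro (rfl | ⟨hqP, hcond⟩)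
              · exact ⟨hq2, Or.inr ⟨rfl, le_refl _⟩⟩
              · refine ⟨hqP, ?_⟩
                rcases hcond with hlt | ⟨heq, hle⟩
                · exact Or.inl hlt
                · exact Or.inr ⟨heq, le_trans hle (le_of_lt huv)⟩
          rw [hset, Finset.card_insert_of_notMem]
          intro hmem
          rcases (Finset.mem_filter.mp hmem).2 with hlt | ⟨_, hle⟩
          · exact lt_irrefl _ hlt
          · exact absurd hle (not_le.mpr huv)
        have hdet0 := key_two _ _ _ _ _ _ hcnt hsum
        refine det_ne hζη ?_
        rw [e0 ζ, e1 η, e1 ζ, e0 η]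
        linear_combination hdet0
      rcases lt_or_gt_of_ne hab with h | h
      · exact main2 a b h hfab
      · exact main2 b a h (by rw [hfab, Finset.pair_comm])
    · -- s ≥ 3
      have hAB : Γ (insertAt t σ ζ) * Γ (insertAt t τ η) = 0 := by
        have hh := single σ ζ i1 ((hPt i1).mpr hi1) ?_
        · rwa [hPB] at hh
        · intro p hp hne
          by_cases hpt : ((p.1:Fin n):ℕ) = (t:ℕ)
          · obtain ⟨hpe, hp2⟩ := hblockt p hp hpt
            rw [hpe, patT2 t σ ζ i1 p.2]
            have hvne : i1 ≠ p.2 := by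
              intro he; apply hne; rw [hpe, ← he]
            have hb := flip2_lt σ τ i1 p.2 hi1 hp2 hvne hs3
            exact rowzero _ hb.1 hb.2 _
          · rw [patTN t σ ζ i1 p hpt]
            have hb := flip1_lt σ τ i1 hi1 (by omega)
            exact rowzero _ hb.1 hb.2 _
      have hDC : Γ (insertAt t τ ζ) * Γ (insertAt t σ η) = 0 := by
        have hh := single τ ζ i1 ((hPt i1).mpr hi1) ?_
        · rwa [hPC] at hh
        · intro p hp hne
          by_cases hpt : ((p.1:Fin n):ℕ) = (t:ℕ)
          · obtain ⟨hpe, hp2⟩ := hblockt p hp hpt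
            rw [hpe, patT2 t τ ζ i1 p.2]
            have hvne : i1 ≠ p.2 := by
              intro he; apply hne; rw [hpe, ← he]
            have hb := flip2_lt τ σ i1 p.2 (Ne.symm hi1) (Ne.symm hp2) hvne
              (by rw [wt_comm]; exact hs3)
            rw [wt_comm τ σ] at hb
            exact rowzero _ hb.2 hb.1 _
          · rw [patTN t τ ζ i1 p hpt]
            have hb := flip1_lt τ σ i1 (Ne.symm hi1) (by rw [wt_comm]; omega)
            rw [wt_comm τ σ] at hb
            exact rowzero _ hb.2 hb.1 _
      refine det_ne hζη ?_
      rw [e0 ζ, e1 η, e1 ζ, e0 η]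
      linear_combination hAB - hDC


end Matchgate
end

section
/- Let n ≥ 2, ℓ ≥ 1, and let Γ : ({0,1}^ℓ)^n → ℂ be a blockwise symmetric matchgate signature of arity nℓ whose matrix form M(Γ) has rank at least 2. Then there exist α_1, α_2, …, α_n ∈ {0,1}^ℓ and positions s, t ∈ {1,…,ℓ} such that the 2×2 submatrix of M(Γ) with rows indexed by α_1 and α_1+e_s and columns indexed by (α_2,α_3,…,α_n) and (α_2+e_t,α_3,…,α_n) is nonsingular, and moreover either both of its off-diagonal entries Γ(α_1,α_2+e_t,α_3,…,α_n) and Γ(α_1+e_s,α_2,α_3,…,α_n) are zero, or both of its diagonal entries Γ(α_1,α_2,…,α_n) and Γ(α_1+e_s,α_2+e_t,α_3,…,α_n) are zero. -/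
open Finset

namespace Matchgate

section Aux

open symmDiff

variable {n ℓ : ℕ}

/-- Flip the bits of a configuration at a finite set of positions. -/
def flipS (x : Fin n → Fin ℓ → Bool) (z : Finset (Fin n × Fin ℓ)) : Fin n → Fin ℓ → Bool :=
  fun j i => Bool.xor (x j i) (decide ((j, i) ∈ z))

/-- The set of positions where two configurations differ. -/
def diffSet (x y : Fin n → Fin ℓ → Bool) : Finset (Fin n × Fin ℓ) :=
  Finset.univ.filter fun q => x q.1 q.2 ≠ y q.1 q.2

/-- The MGI sign, as an integer. -/
def eta (D : Finset (Fin n × Fin ℓ)) (p : Fin n × Fin ℓ) : ℤ :=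
  (-1) ^ (D.filter fun q => q.1 < p.1 ∨ (q.1 = p.1 ∧ q.2 ≤ p.2)).card

/-- The MGI sign, as a complex number. -/
def sgnC (D : Finset (Fin n × Fin ℓ)) (p : Fin n × Fin ℓ) : ℂ :=
  (-1) ^ (D.filter fun q => q.1 < p.1 ∨ (q.1 = p.1 ∧ q.2 ≤ p.2)).card

/-- Fourier character on subsets. -/
def chi (S z : Finset (Fin n × Fin ℓ)) : ℂ := (-1) ^ (S ∩ z).card

/-- Two nonzero entries differing in exactly one bit in each of two distinct blocks. -/
def Good (Γ : (Fin n → Fin ℓ → Bool) → ℂ) : Prop :=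
  ∃ (u : Fin n → Fin ℓ → Bool) (p q : Fin n × Fin ℓ),
    p.1 ≠ q.1 ∧ Γ u ≠ 0 ∧ Γ (flipS u {p, q}) ≠ 0

lemma decide_mem_symmDiff (q : Fin n × Fin ℓ) (w z : Finset (Fin n × Fin ℓ)) :
    decide (q ∈ w ∆ z) = Bool.xor (decide (q ∈ w)) (decide (q ∈ z)) := by
  by_cases h1 : q ∈ w <;> by_cases h2 : q ∈ z <;> simp [Finset.mem_symmDiff, h1, h2]

lemma decide_mem_singleton (q p : Fin n × Fin ℓ) :
    decide (q ∈ ({p} : Finset (Fin n × Fin ℓ))) = decide (q = p) := by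
  rw [decide_eq_decide]; exact Finset.mem_singleton

lemma mem_diffSet {x y : Fin n → Fin ℓ → Bool} {q : Fin n × Fin ℓ} :
    q ∈ diffSet x y ↔ x q.1 q.2 ≠ y q.1 q.2 := by simp [diffSet]

lemma decide_mem_diffSet (x y : Fin n → Fin ℓ → Bool) (j : Fin n) (i : Fin ℓ) :
    decide (((j, i) : Fin n × Fin ℓ) ∈ diffSet x y) = Bool.xor (x j i) (y j i) := by
  have : (((j, i) : Fin n × Fin ℓ) ∈ diffSet x y) ↔ x j i ≠ y j i := mem_diffSet
  rw [decide_eq_decide.mpr this]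
  by_cases hxy : x j i = y j i
  · simp [hxy]
  · have h1 : decide (x j i ≠ y j i) = true := by simpa using hxy
    rw [h1]
    cases hy : y j i
    · have hx : x j i = true := by cases hx : x j i <;> simp_all
      rw [hx]; rfl
    · have hx : x j i = false := by cases hx : x j i <;> simp_all
      rw [hx]; rfl

@[simp] lemma flipS_empty (x : Fin n → Fin ℓ → Bool) :
    flipS x (∅ : Finset (Fin n × Fin ℓ)) = x := by
  funext j i; simp [flipS]

lemma flipS_flipS (x : Fin n → Fin ℓ → Bool) (w z : Finset (Fin n × Fin ℓ)) :
    flipS (flipS x w) z = flipS x (w ∆ z) := by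
  funext j i
  simp only [flipS, decide_mem_symmDiff, Bool.xor_assoc]

lemma flipS_diffSet (x y : Fin n → Fin ℓ → Bool) : flipS x (diffSet x y) = y := by
  funext j i
  simp only [flipS, decide_mem_diffSet]
  cases hx : x j i <;> cases hy : y j i <;> rfl

lemma pair_eq_symmDiff {p r : Fin n × Fin ℓ} (h : p ≠ r) :
    ({p} ∆ {r} : Finset (Fin n × Fin ℓ)) = {p, r} := by
  ext q
  by_cases h1 : q = p <;> by_cases h2 : q = r <;>
    simp [Finset.mem_symmDiff, Finset.mem_insert, h1, h2, h, Ne.symm h]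

lemma sgnC_ne_zero (D : Finset (Fin n × Fin ℓ)) (p : Fin n × Fin ℓ) : sgnC D p ≠ 0 := by
  rw [sgnC]
  exact pow_ne_zero _ (by norm_num)

lemma sgnC_eq_cast (D : Finset (Fin n × Fin ℓ)) (p : Fin n × Fin ℓ) :
    sgnC D p = ((eta D p : ℤ) : ℂ) := by
  rw [sgnC, eta]; push_cast; ring

lemma master {Γ : (Fin n → Fin ℓ → Bool) → ℂ} (hmgi : MGI Γ)
    (x y : Fin n → Fin ℓ → Bool) (w : Finset (Fin n × Fin ℓ)) :
    ∑ p ∈ diffSet x y,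
      sgnC (diffSet x y) p * Γ (flipS x (w ∆ {p})) * Γ (flipS y (w ∆ {p})) = 0 := by
  have H := hmgi (flipS x w) (diffSet x y)
  rw [← H]
  refine Finset.sum_congr rfl fun p _ => ?_
  have h1 : (fun j i => Bool.xor (flipS x w j i) (decide ((j, i) = p))) = flipS x (w ∆ {p}) := by
    funext j i
    simp only [flipS, decide_mem_symmDiff, decide_mem_singleton, Bool.xor_assoc]
  have h2 : (fun j i => Bool.xor (flipS x w j i)
      (Bool.xor (decide ((j, i) ∈ diffSet x y)) (decide ((j, i) = p)))) = flipS y (w ∆ {p}) := by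
    funext j i
    simp only [flipS, decide_mem_symmDiff, decide_mem_singleton, decide_mem_diffSet]
    cases hx : x j i <;> cases hy : y j i <;>
      cases hw : decide ((j, i) ∈ w) <;> cases hp : decide ((j, i) = p) <;> rfl
  rw [h1, h2]
  rfl


lemma ref {Γ : (Fin n → Fin ℓ → Bool) → ℂ} (hmgi : MGI Γ) (hng : ¬ Good Γ)
    {x y : Fin n → Fin ℓ → Bool} {p0 : Fin n × Fin ℓ}
    (hx : Γ x ≠ 0) (hy : Γ y ≠ 0) (hp0 : p0 ∈ diffSet x y) :
    ∃ r ∈ diffSet x y, r ≠ p0 ∧ r.1 = p0.1 ∧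
      Γ (flipS x {p0, r}) ≠ 0 ∧ Γ (flipS y {p0, r}) ≠ 0 := by
  by_contra hcon
  push_neg at hcon
  have H := master hmgi x y {p0}
  have Hsingle : ∑ p ∈ diffSet x y,
      sgnC (diffSet x y) p * Γ (flipS x ({p0} ∆ {p})) * Γ (flipS y ({p0} ∆ {p}))
      = sgnC (diffSet x y) p0 * Γ (flipS x ({p0} ∆ {p0})) * Γ (flipS y ({p0} ∆ {p0})) := by
    refine Finset.sum_eq_single_of_mem p0 hp0 fun r hr hne => ?_
    rw [pair_eq_symmDiff (Ne.symm hne)]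
    by_cases hz1 : Γ (flipS x {p0, r}) = 0
    · rw [hz1]; ring
    · by_cases h1 : r.1 = p0.1
      · rw [hcon r hr hne h1 hz1]; ring
      · exact absurd ⟨x, p0, r, fun h => h1 h.symm, hx, hz1⟩ hng
  rw [Hsingle, symmDiff_self] at H
  simp only [Finset.bot_eq_empty, flipS_empty] at H
  exact (mul_ne_zero (mul_ne_zero (sgnC_ne_zero _ _) hx) hy) H

lemma diffSet_flip_left {x y : Fin n → Fin ℓ → Bool} {p r : Fin n × Fin ℓ}
    (hp : p ∈ diffSet x y) (hr : r ∈ diffSet x y) :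
    diffSet (flipS x {p, r}) y = (diffSet x y) \ {p, r} := by
  ext q
  have hflip : flipS x {p, r} q.1 q.2
      = Bool.xor (x q.1 q.2) (decide (q ∈ ({p, r} : Finset (Fin n × Fin ℓ)))) := rfl
  rw [mem_diffSet, Finset.mem_sdiff, mem_diffSet, hflip]
  by_cases hm : q ∈ ({p, r} : Finset (Fin n × Fin ℓ))
  · have hqD : x q.1 q.2 ≠ y q.1 q.2 := by
      rcases Finset.mem_insert.mp hm with h | h
      · subst h; exact mem_diffSet.mp hp
      · rw [Finset.mem_singleton] at h; subst h; exact mem_diffSet.mp hr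
    have hdec : decide (q ∈ ({p, r} : Finset (Fin n × Fin ℓ))) = true := decide_eq_true hm
    rw [hdec]
    simp only [hm, not_true_eq_false, and_false, iff_false, ne_eq, not_not]
    cases hx1 : x q.1 q.2 <;> cases hy1 : y q.1 q.2 <;> simp_all
  · have hdec : decide (q ∈ ({p, r} : Finset (Fin n × Fin ℓ))) = false :=
      decide_eq_false hm
    rw [hdec]
    simp [hm]

lemma mix {Γ : (Fin n → Fin ℓ → Bool) → ℂ} (hmgi : MGI Γ) (hng : ¬ Good Γ) :
    ∀ (x y : Fin n → Fin ℓ → Bool) (k : Fin n), Γ x ≠ 0 → Γ y ≠ 0 →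
      Γ (Function.update x k (y k)) ≠ 0 := by
  suffices H : ∀ (c : ℕ) (x y : Fin n → Fin ℓ → Bool) (k : Fin n),
      ((diffSet x y).filter fun q => q.1 = k).card = c →
      Γ x ≠ 0 → Γ y ≠ 0 → Γ (Function.update x k (y k)) ≠ 0 by
    exact fun x y k hx hy => H _ x y k rfl hx hy
  intro c
  induction c using Nat.strong_induction_on with
  | _ c ih =>
    intro x y k hc hx hy
    by_cases h0 : ((diffSet x y).filter fun q => q.1 = k) = ∅
    · have hxy : y k = x k := by
        funext i
        by_contra hne
        have hmem : ((k, i) : Fin n × Fin ℓ) ∈ (diffSet x y).filter fun q => q.1 = k := by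
          refine Finset.mem_filter.mpr ⟨mem_diffSet.mpr ?_, rfl⟩
          exact fun h => hne h.symm
        rw [h0] at hmem
        exact absurd hmem (Finset.notMem_empty _)
      rw [hxy, Function.update_eq_self]
      exact hx
    · obtain ⟨p0, hp0⟩ := Finset.nonempty_iff_ne_empty.mpr h0
      have hp0D : p0 ∈ diffSet x y := (Finset.mem_filter.mp hp0).1
      have hp0k : p0.1 = k := (Finset.mem_filter.mp hp0).2
      obtain ⟨r, hrD, hrne, hr1, hx', hy'⟩ := ref hmgi hng hx hy hp0D
      have hdiff := diffSet_flip_left hp0D hrD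
      have hsub : ((diffSet (flipS x {p0, r}) y).filter fun q => q.1 = k)
          ⊂ ((diffSet x y).filter fun q => q.1 = k) := by
        rw [hdiff]
        refine (Finset.ssubset_iff_of_subset
          (Finset.filter_subset_filter _ Finset.sdiff_subset)).mpr ?_
        refine ⟨p0, hp0, ?_⟩
        simp [Finset.mem_filter, Finset.mem_sdiff]
      have hcard : ((diffSet (flipS x {p0, r}) y).filter fun q => q.1 = k).card < c := by
        rw [← hc]; exact Finset.card_lt_card hsub
      have hres := ih _ hcard (flipS x {p0, r}) y k rfl hx' hy
      have hupd : Function.update (flipS x {p0, r}) k (y k) = Function.update x k (y k) := by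
        funext j
        rcases eq_or_ne j k with rfl | hj
        · rw [Function.update_self, Function.update_self]
        · rw [Function.update_of_ne hj, Function.update_of_ne hj]
          funext i
          have hm : ((j, i) : Fin n × Fin ℓ) ∉ ({p0, r} : Finset (Fin n × Fin ℓ)) := by
            intro hmem
            rcases Finset.mem_insert.mp hmem with h | h
            · exact hj (by rw [show j = p0.1 from (congrArg Prod.fst h), hp0k])
            · rw [Finset.mem_singleton] at h
              exact hj (by rw [show j = r.1 from (congrArg Prod.fst h), hr1, hp0k])
          show Bool.xor (x j i) (decide (((j, i) : Fin n × Fin ℓ) ∈ ({p0, r} : Finset _))) = x j i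
          simp [hm]
      rwa [hupd] at hres


lemma zmod_ind_xor (a b : Bool) :
    (if Bool.xor a b = true then (1 : ZMod 2) else 0)
      = (if a = true then (1 : ZMod 2) else 0) + (if b = true then (1 : ZMod 2) else 0) := by
  cases a <;> cases b <;> decide

lemma wt_cast (a : Fin ℓ → Bool) :
    ((wt a : ℕ) : ZMod 2) = ∑ i, (if a i = true then (1 : ZMod 2) else 0) := by
  rw [wt, Finset.natCast_card_filter]

lemma wtB_cast (x : Fin n → Fin ℓ → Bool) :
    ((wtB x : ℕ) : ZMod 2) = ∑ j, ∑ i, (if x j i = true then (1 : ZMod 2) else 0) := by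
  rw [wtB, Nat.cast_sum]
  exact Finset.sum_congr rfl fun j _ => wt_cast (x j)

lemma card_cast_eq (z : Finset (Fin n × Fin ℓ)) :
    ((z.card : ℕ) : ZMod 2)
      = ∑ j, ∑ i, (if ((j, i) : Fin n × Fin ℓ) ∈ z then (1 : ZMod 2) else 0) := by
  have h1 := Fintype.sum_prod_type
    (f := fun p : Fin n × Fin ℓ => if p ∈ z then (1 : ZMod 2) else 0)
  rw [← h1, Finset.sum_boole]
  congr 1
  have : Finset.univ.filter (fun p : Fin n × Fin ℓ => p ∈ z) = z := by
    ext p; simp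
  rw [this]

lemma wtB_flipS_cast (x : Fin n → Fin ℓ → Bool) (z : Finset (Fin n × Fin ℓ)) :
    ((wtB (flipS x z) : ℕ) : ZMod 2) = ((wtB x : ℕ) : ZMod 2) + z.card := by
  rw [wtB_cast, wtB_cast, card_cast_eq, ← Finset.sum_add_distrib]
  refine Finset.sum_congr rfl fun j _ => ?_
  rw [← Finset.sum_add_distrib]
  refine Finset.sum_congr rfl fun i _ => ?_
  show (if Bool.xor (x j i) (decide ((j, i) ∈ z)) = true then (1 : ZMod 2) else 0) = _
  rw [zmod_ind_xor]
  congr 1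
  by_cases h : (j, i) ∈ z <;> simp [h]

lemma same_parity {Γ : (Fin n → Fin ℓ → Bool) → ℂ} (hpar : ParityCond Γ)
    {a b : Fin n → Fin ℓ → Bool} (ha : Γ a ≠ 0) (hb : Γ b ≠ 0) :
    ((wtB a : ℕ) : ZMod 2) = ((wtB b : ℕ) : ZMod 2) := by
  have key : wtB a % 2 = wtB b % 2 := by
    rcases hpar with h | h
    · rcases Nat.mod_two_eq_zero_or_one (wtB a) with h1 | h1
      · exact absurd (h a h1) ha
      · rcases Nat.mod_two_eq_zero_or_one (wtB b) with h2 | h2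
        · exact absurd (h b h2) hb
        · rw [h1, h2]
    · rcases Nat.mod_two_eq_zero_or_one (wtB a) with h1 | h1
      · rcases Nat.mod_two_eq_zero_or_one (wtB b) with h2 | h2
        · rw [h1, h2]
        · exact absurd (h b h2) hb
      · exact absurd (h a h1) ha
  rw [← ZMod.natCast_mod (wtB a) 2, ← ZMod.natCast_mod (wtB b) 2, key]

lemma even_card_of_nonzero {Γ : (Fin n → Fin ℓ → Bool) → ℂ} (hpar : ParityCond Γ)
    {x : Fin n → Fin ℓ → Bool} {z : Finset (Fin n × Fin ℓ)}
    (hx : Γ x ≠ 0) (hz : Γ (flipS x z) ≠ 0) : Even z.card := by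
  have h := same_parity hpar hx hz
  rw [wtB_flipS_cast] at h
  have hc : ((z.card : ℕ) : ZMod 2) = 0 := (left_eq_add.mp h)
  rw [ZMod.natCast_eq_zero_iff] at hc
  exact even_iff_two_dvd.mpr hc

lemma wtB_update_cast (x : Fin n → Fin ℓ → Bool) (k : Fin n) (c : Fin ℓ → Bool) :
    ((wtB (Function.update x k c) : ℕ) : ZMod 2) + ((wt (x k) : ℕ) : ZMod 2)
      = ((wtB x : ℕ) : ZMod 2) + ((wt c : ℕ) : ZMod 2) := by
  have e1 : wtB (Function.update x k c) = (∑ j ∈ Finset.univ.erase k, wt (x j)) + wt c := by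
    rw [wtB, ← Finset.sum_erase_add _ _ (Finset.mem_univ k), Function.update_self]
    congr 1
    exact Finset.sum_congr rfl fun j hj =>
      by rw [Function.update_of_ne (Finset.ne_of_mem_erase hj)]
  have e2 : wtB x = (∑ j ∈ Finset.univ.erase k, wt (x j)) + wt (x k) := by
    rw [wtB, ← Finset.sum_erase_add _ _ (Finset.mem_univ k)]
  rw [e1, e2]
  push_cast
  ring

lemma row_parity {Γ : (Fin n → Fin ℓ → Bool) → ℂ} (hpar : ParityCond Γ) (hmgi : MGI Γ)
    (hng : ¬ Good Γ) {x x' : Fin n → Fin ℓ → Bool}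
    (hx : Γ x ≠ 0) (hx' : Γ x' ≠ 0) (k : Fin n) :
    ((wt (x k) : ℕ) : ZMod 2) = ((wt (x' k) : ℕ) : ZMod 2) := by
  have hm : Γ (Function.update x k (x' k)) ≠ 0 := mix hmgi hng x x' k hx hx'
  have h1 := same_parity hpar hx hm
  have h2 := wtB_update_cast x k (x' k)
  rw [← h1] at h2
  exact (add_left_cancel h2)

lemma card_filter_fst_cast (z : Finset (Fin n × Fin ℓ)) (k : Fin n) :
    (((z.filter fun q => q.1 = k).card : ℕ) : ZMod 2)
      = ∑ i, (if ((k, i) : Fin n × Fin ℓ) ∈ z then (1 : ZMod 2) else 0) := by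
  have hcards : (z.filter fun q => q.1 = k).card
      = (Finset.univ.filter fun i : Fin ℓ => ((k, i) : Fin n × Fin ℓ) ∈ z).card := by
    apply Finset.card_bij (fun q _ => q.2)
    · intro q hq
      obtain ⟨hqz, hqk⟩ := Finset.mem_filter.mp hq
      refine Finset.mem_filter.mpr ⟨Finset.mem_univ _, ?_⟩
      have : ((k, q.2) : Fin n × Fin ℓ) = q := by
        rw [← hqk]
      rwa [this]
    · intro q1 h1 q2 h2 hh
      obtain ⟨_, hk1⟩ := Finset.mem_filter.mp h1
      obtain ⟨_, hk2⟩ := Finset.mem_filter.mp h2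
      exact Prod.ext (hk1.trans hk2.symm) hh
    · intro i hi
      obtain ⟨_, hiz⟩ := Finset.mem_filter.mp hi
      exact ⟨(k, i), Finset.mem_filter.mpr ⟨hiz, rfl⟩, rfl⟩
  rw [hcards, Finset.natCast_card_filter]

lemma kill_odd {Γ : (Fin n → Fin ℓ → Bool) → ℂ} (hpar : ParityCond Γ) (hmgi : MGI Γ)
    (hng : ¬ Good Γ) {x : Fin n → Fin ℓ → Bool} {z : Finset (Fin n × Fin ℓ)}
    (hx : Γ x ≠ 0) (hz : Γ (flipS x z) ≠ 0) (k : Fin n) :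
    Even ((z.filter fun q => q.1 = k).card) := by
  have hrow := row_parity hpar hmgi hng hx hz k
  have hflip : ((wt (flipS x z k) : ℕ) : ZMod 2)
      = ((wt (x k) : ℕ) : ZMod 2) + (((z.filter fun q => q.1 = k).card : ℕ) : ZMod 2) := by
    rw [wt_cast, wt_cast, card_filter_fst_cast, ← Finset.sum_add_distrib]
    refine Finset.sum_congr rfl fun i _ => ?_
    show (if Bool.xor (x k i) (decide ((k, i) ∈ z)) = true then (1 : ZMod 2) else 0) = _
    rw [zmod_ind_xor]
    congr 1
    by_cases h : (k, i) ∈ z <;> simp [h]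
  rw [hflip] at hrow
  have h0 : (((z.filter fun q => q.1 = k).card : ℕ) : ZMod 2) = 0 := left_eq_add.mp hrow
  rw [ZMod.natCast_eq_zero_iff] at h0
  exact even_iff_two_dvd.mpr h0


lemma sum_sign_nat (N : Finset ℕ) :
    ∑ m ∈ N, (-1 : ℤ) ^ ((N.filter fun q => q ≤ m).card) = if Even N.card then 0 else -1 := by
  induction N using Finset.induction_on_max with
  | empty => simp
  | insert a s hmax ih =>
    have has : a ∉ s := fun h => lt_irrefl a (hmax a h)
    rw [Finset.sum_insert has]
    have hfa : ((insert a s).filter fun q => q ≤ a) = insert a s := by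
      apply Finset.filter_true_of_mem
      intro q hq
      rcases Finset.mem_insert.mp hq with rfl | h
      · exact le_refl q
      · exact le_of_lt (hmax q h)
    have hterm : ∑ m ∈ s, (-1 : ℤ) ^ (((insert a s).filter fun q => q ≤ m).card)
        = ∑ m ∈ s, (-1 : ℤ) ^ ((s.filter fun q => q ≤ m).card) := by
      refine Finset.sum_congr rfl fun m hm => ?_
      rw [Finset.filter_insert, if_neg (not_le.mpr (hmax m hm))]
    rw [hfa, Finset.card_insert_of_notMem has, hterm, ih]
    rcases Nat.even_or_odd s.card with he | ho
    · rw [if_pos he, if_neg (by simpa [Nat.even_add_one] using he)]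
      rw [pow_succ, he.neg_one_pow]
      ring
    · have ho' := Nat.not_even_iff_odd.mpr ho
      rw [if_neg ho', if_pos (by simpa [Nat.even_add_one] using ho')]
      rw [pow_succ, ho.neg_one_pow]
      ring

def posIdx {n ℓ : ℕ} (q : Fin n × Fin ℓ) : ℕ := (q.1 : ℕ) * ℓ + (q.2 : ℕ)

lemma posIdx_inj : Function.Injective (posIdx (n := n) (ℓ := ℓ)) := by
  rintro ⟨j1, i1⟩ ⟨j2, i2⟩ h
  simp only [posIdx] at h
  have hi1 := i1.isLt
  have hi2 := i2.isLt
  have hj : (j1 : ℕ) = (j2 : ℕ) := by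
    rcases lt_trichotomy (j1 : ℕ) (j2 : ℕ) with hlt | heq | hgt
    · exfalso
      have h2 : ((j1 : ℕ) + 1) * ℓ ≤ (j2 : ℕ) * ℓ := Nat.mul_le_mul_right ℓ hlt
      rw [add_mul, one_mul] at h2
      omega
    · exact heq
    · exfalso
      have h2 : ((j2 : ℕ) + 1) * ℓ ≤ (j1 : ℕ) * ℓ := Nat.mul_le_mul_right ℓ hgt
      rw [add_mul, one_mul] at h2
      omega
  have hmul : (j1 : ℕ) * ℓ = (j2 : ℕ) * ℓ := by rw [hj]
  have hi : (i1 : ℕ) = (i2 : ℕ) := by omega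
  exact Prod.ext (Fin.ext hj) (Fin.ext hi)

lemma posIdx_le (q p : Fin n × Fin ℓ) :
    (q.1 < p.1 ∨ (q.1 = p.1 ∧ q.2 ≤ p.2)) ↔ posIdx q ≤ posIdx p := by
  obtain ⟨j1, i1⟩ := q
  obtain ⟨j2, i2⟩ := p
  simp only [posIdx]
  have hi1 := i1.isLt
  have hi2 := i2.isLt
  constructor
  · rintro (hlt | ⟨heq, hle⟩)
    · have hlt' : (j1 : ℕ) < (j2 : ℕ) := hlt
      have h2 : ((j1 : ℕ) + 1) * ℓ ≤ (j2 : ℕ) * ℓ := Nat.mul_le_mul_right ℓ hlt'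
      rw [add_mul, one_mul] at h2
      omega
    · have heq' : (j1 : ℕ) = (j2 : ℕ) := by rw [heq]
      have hle' : (i1 : ℕ) ≤ (i2 : ℕ) := hle
      have hmul : (j1 : ℕ) * ℓ = (j2 : ℕ) * ℓ := by rw [heq']
      omega
  · intro h
    rcases lt_trichotomy (j1 : ℕ) (j2 : ℕ) with hlt | heq | hgt
    · exact Or.inl hlt
    · refine Or.inr ⟨Fin.ext heq, ?_⟩
      have hmul : (j1 : ℕ) * ℓ = (j2 : ℕ) * ℓ := by rw [heq]
      show (i1 : ℕ) ≤ (i2 : ℕ)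
      omega
    · exfalso
      have h2 : ((j2 : ℕ) + 1) * ℓ ≤ (j1 : ℕ) * ℓ := Nat.mul_le_mul_right ℓ hgt
      rw [add_mul, one_mul] at h2
      omega

lemma eta_sum (E : Finset (Fin n × Fin ℓ)) :
    ∑ p ∈ E, eta E p = if Even E.card then 0 else -1 := by
  have hre : ∀ p ∈ E, eta E p
      = (-1 : ℤ) ^ (((E.image posIdx).filter fun m => m ≤ posIdx p).card) := by
    intro p _
    rw [eta]
    congr 1
    have h1 : E.filter (fun q => q.1 < p.1 ∨ (q.1 = p.1 ∧ q.2 ≤ p.2))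
        = E.filter fun q => posIdx q ≤ posIdx p := by
      apply Finset.filter_congr
      intro q _
      exact posIdx_le q p
    rw [h1, Finset.filter_image]
    rw [Finset.card_image_of_injective _ posIdx_inj]
  rw [Finset.sum_congr rfl hre]
  have himg : ∑ m ∈ E.image posIdx, (-1 : ℤ) ^ (((E.image posIdx).filter fun q => q ≤ m).card)
      = ∑ p ∈ E, (-1 : ℤ) ^ (((E.image posIdx).filter fun q => q ≤ posIdx p).card) :=
    Finset.sum_image (fun x _ y _ h => posIdx_inj h)
  rw [← himg, sum_sign_nat, Finset.card_image_of_injective _ posIdx_inj]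

lemma eta_cast_one (D : Finset (Fin n × Fin ℓ)) (p : Fin n × Fin ℓ) :
    ((eta D p : ℤ) : ZMod 2) = 1 := by
  rw [eta]
  push_cast
  rw [show ((-1 : ZMod 2)) = 1 from by decide, one_pow]

lemma beta_ne_zero_of_odd {D T : Finset (Fin n × Fin ℓ)} (hT : ¬ Even T.card) :
    (∑ r ∈ T, eta D r) ≠ 0 := by
  intro h0
  have h1 : ((∑ r ∈ T, eta D r : ℤ) : ZMod 2) = ((T.card : ℕ) : ZMod 2) := by
    push_cast
    rw [Finset.sum_congr rfl fun r _ => eta_cast_one D r]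
    simp
  rw [h0] at h1
  have h2 : ((T.card : ℕ) : ZMod 2) = 0 := by rw [← h1]; simp
  rw [ZMod.natCast_eq_zero_iff] at h2
  exact hT (even_iff_two_dvd.mpr h2)

lemma eta_filter_eq {D : Finset (Fin n × Fin ℓ)} {k : Fin n} (hk : ∀ q ∈ D, k ≤ q.1)
    {r : Fin n × Fin ℓ} (hr : r.1 = k) :
    (D.filter fun q => q.1 < r.1 ∨ (q.1 = r.1 ∧ q.2 ≤ r.2))
      = ((D.filter fun q => q.1 = k).filter fun q => q.1 < r.1 ∨ (q.1 = r.1 ∧ q.2 ≤ r.2)) := by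
  ext q
  simp only [Finset.mem_filter]
  constructor
  · rintro ⟨hq, hor⟩
    refine ⟨⟨hq, ?_⟩, hor⟩
    rcases hor with h | h
    · exact absurd h (not_lt.mpr (by rw [hr]; exact hk q hq))
    · rw [h.1, hr]
  · rintro ⟨⟨hq, _⟩, hor⟩; exact ⟨hq, hor⟩

lemma beta_D0_zero {D : Finset (Fin n × Fin ℓ)} {k : Fin n} (hk : ∀ q ∈ D, k ≤ q.1)
    (hev : Even ((D.filter fun q => q.1 = k).card)) :
    ∑ r ∈ D.filter (fun q => q.1 = k), eta D r = 0 := by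
  have he : ∀ r ∈ D.filter (fun q => q.1 = k), eta D r = eta (D.filter fun q => q.1 = k) r := by
    intro r hr
    have hrk : r.1 = k := (Finset.mem_filter.mp hr).2
    rw [eta, eta, eta_filter_eq hk hrk]
  rw [Finset.sum_congr rfl he, eta_sum, if_pos hev]


lemma neg_one_pow_symmDiff (A B : Finset (Fin n × Fin ℓ)) :
    ((-1 : ℂ)) ^ (A ∆ B).card = (-1) ^ A.card * (-1) ^ B.card := by
  have hd : Disjoint (A \ B) (B \ A) := disjoint_sdiff_sdiff
  have hcard : (A ∆ B).card = (A \ B).card + (B \ A).card := by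
    rw [show A ∆ B = (A \ B) ∪ (B \ A) from by rw [symmDiff_def, Finset.sup_eq_union]]
    rw [Finset.card_union_of_disjoint hd]
  have h1 : (A \ B).card + (A ∩ B).card = A.card := Finset.card_sdiff_add_card_inter A B
  have h2 : (B \ A).card + (B ∩ A).card = B.card := Finset.card_sdiff_add_card_inter B A
  have h3 : (A ∩ B).card = (B ∩ A).card := by rw [Finset.inter_comm]
  have key : A.card + B.card = (A ∆ B).card + 2 * (A ∩ B).card := by omega
  rw [← pow_add, key, pow_add, pow_mul]
  norm_num

lemma chi_comm (S z : Finset (Fin n × Fin ℓ)) : chi S z = chi z S := by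
  rw [chi, chi, Finset.inter_comm]

lemma chi_symmDiff_right (S z w : Finset (Fin n × Fin ℓ)) :
    chi S (z ∆ w) = chi S z * chi S w := by
  have h := inf_symmDiff_distrib_left (a := S) (b := z) (c := w)
  simp only [Finset.inf_eq_inter] at h
  rw [chi, h, neg_one_pow_symmDiff, chi, chi]

lemma chi_symmDiff_left (S T z : Finset (Fin n × Fin ℓ)) :
    chi (S ∆ T) z = chi S z * chi T z := by
  rw [chi_comm, chi_symmDiff_right, chi_comm S z, chi_comm T z]

lemma chi_singleton (S : Finset (Fin n × Fin ℓ)) (p : Fin n × Fin ℓ) :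
    chi S {p} = if p ∈ S then -1 else 1 := by
  by_cases h : p ∈ S
  · have : S ∩ {p} = {p} := by
      ext q; simp only [Finset.mem_inter, Finset.mem_singleton]
      constructor
      · rintro ⟨_, h2⟩; exact h2
      · rintro rfl; exact ⟨h, rfl⟩
    rw [chi, this, if_pos h]
    simp
  · have : S ∩ {p} = ∅ := by
      ext q; simp only [Finset.mem_inter, Finset.mem_singleton, Finset.notMem_empty, iff_false,
        not_and]
      rintro hq rfl; exact h hq
    rw [chi, this, if_neg h]
    simp

lemma chi_empty (S : Finset (Fin n × Fin ℓ)) : chi S ∅ = 1 := by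
  rw [chi]; simp

lemma chi_even {S z : Finset (Fin n × Fin ℓ)} (h : Even ((S ∩ z).card)) : chi S z = 1 := by
  rw [chi]; exact h.neg_one_pow

lemma orth (D z : Finset (Fin n × Fin ℓ)) (hzD : z ⊆ D) (hz : z ≠ ∅) :
    ∑ S ∈ D.powerset, chi S z = 0 := by
  obtain ⟨t, ht⟩ := Finset.nonempty_iff_ne_empty.mpr hz
  refine Finset.sum_involution (fun S _ => S ∆ {t}) ?_ ?_ ?_ ?_
  · intro S _
    rw [chi_symmDiff_left, chi_comm ({t} : Finset (Fin n × Fin ℓ)) z, chi_singleton, if_pos ht]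
    ring
  · intro S _ _ heq
    have heq' : S ∆ {t} = S := heq
    have h1 : t ∈ S ∆ {t} ↔ t ∈ S := by rw [heq']
    by_cases hts : t ∈ S
    · have hnot : t ∉ S ∆ {t} := by simp [Finset.mem_symmDiff, hts]
      exact hnot (h1.mpr hts)
    · have hyes : t ∈ S ∆ {t} := by simp [Finset.mem_symmDiff, hts]
      exact hts (h1.mp hyes)
  · intro S hS
    rw [Finset.mem_powerset] at hS ⊢
    intro q hq
    rcases Finset.mem_symmDiff.mp hq with ⟨h1, _⟩ | ⟨h1, _⟩
    · exact hS h1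
    · rw [Finset.mem_singleton] at h1
      exact h1 ▸ hzD ht
  · intro S _
    exact symmDiff_symmDiff_cancel_right {t} S


lemma fourier {D : Finset (Fin n × Fin ℓ)} {k : Fin n}
    (hk : ∀ q ∈ D, k ≤ q.1)
    (F : Finset (Fin n × Fin ℓ) → ℂ)
    (hrel : ∀ w ∈ D.powerset, ∑ p ∈ D, sgnC D p * F (w ∆ {p}) = 0)
    (hkill : ∀ z ∈ D.powerset, ¬ Even ((z.filter fun q => q.1 = k).card) → F z = 0)
    (hD : Even D.card) (hD0 : Even ((D.filter fun q => q.1 = k).card)) :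
    F (D.filter fun q => q.1 = k) = F ∅ := by
  classical
  set D0 : Finset (Fin n × Fin ℓ) := D.filter fun q => q.1 = k with hD0def
  have hD0sub : D0 ⊆ D := Finset.filter_subset _ _
  set g : Finset (Fin n × Fin ℓ) → ℂ := fun z => F z - F (z ∆ D0) with hg
  have hmem : ∀ w ∈ D.powerset, ∀ z ⊆ D, w ∆ z ∈ D.powerset := by
    intro w hw z hz
    rw [Finset.mem_powerset] at hw ⊢
    intro q hq
    rcases Finset.mem_symmDiff.mp hq with ⟨h1, _⟩ | ⟨h1, _⟩
    · exact hw h1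
    · exact hz h1
  -- filter = inter with D0, for subsets of D
  have hfilter_eq : ∀ w ⊆ D, w.filter (fun q => q.1 = k) = w ∩ D0 := by
    intro w hw
    ext q
    rw [hD0def]
    simp only [Finset.mem_filter, Finset.mem_inter]
    constructor
    · rintro ⟨h1, h2⟩; exact ⟨h1, hw h1, h2⟩
    · rintro ⟨h1, _, h2⟩; exact ⟨h1, h2⟩
  -- support parity of g
  have hsupp : ∀ z ∈ D.powerset, g z ≠ 0 → Even ((z ∩ D0).card) := by
    intro z hz hgz
    have hzsub : z ⊆ D := Finset.mem_powerset.mp hz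
    by_contra hodd
    apply hgz
    have h1 : F z = 0 := by
      apply hkill z hz
      rwa [hfilter_eq z hzsub]
    have h2 : F (z ∆ D0) = 0 := by
      apply hkill _ (hmem z hz D0 hD0sub)
      have hzd : (z ∆ D0) ⊆ D := Finset.mem_powerset.mp (hmem z hz D0 hD0sub)
      rw [hfilter_eq _ hzd]
      -- (z ∆ D0) ∩ D0 = D0 \ z
      have he : (z ∆ D0) ∩ D0 = D0 \ z := by
        ext q
        simp only [Finset.mem_inter, Finset.mem_symmDiff, Finset.mem_sdiff]
        constructor
        · rintro ⟨h3 | h3, h4⟩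
          · exact absurd h4 h3.2
          · exact ⟨h4, h3.2⟩
        · rintro ⟨h3, h4⟩
          exact ⟨Or.inr ⟨h3, h4⟩, h3⟩
      rw [he]
      have hc1 : (D0 \ z).card + (D0 ∩ z).card = D0.card := Finset.card_sdiff_add_card_inter _ _
      have hc2 : (D0 ∩ z).card = (z ∩ D0).card := by rw [Finset.inter_comm]
      rw [Nat.even_iff] at hD0 ⊢
      rw [Nat.even_iff] at hodd
      omega
    simp only [hg]
    rw [h1, h2, sub_zero]
  -- the Fourier transform of g
  set gh : Finset (Fin n × Fin ℓ) → ℂ := fun S => ∑ z ∈ D.powerset, g z * chi S z with hgh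
  -- relations for g
  have grel : ∀ w ∈ D.powerset, ∑ p ∈ D, sgnC D p * g (w ∆ {p}) = 0 := by
    intro w hw
    have e : ∀ p ∈ D, sgnC D p * g (w ∆ {p})
        = sgnC D p * F (w ∆ {p}) - sgnC D p * F ((w ∆ D0) ∆ {p}) := by
      intro p _
      have hcomm : (w ∆ {p}) ∆ D0 = (w ∆ D0) ∆ {p} := by
        rw [symmDiff_assoc, symmDiff_assoc, symmDiff_comm ({p} : Finset (Fin n × Fin ℓ)) D0]
      simp only [hg]
      rw [hcomm]
      ring
    rw [Finset.sum_congr rfl e, Finset.sum_sub_distrib]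
    rw [hrel w hw, hrel (w ∆ D0) (hmem w hw D0 hD0sub), sub_zero]
  -- balance: unbalanced Fourier modes vanish
  have hbal : ∀ S ∈ D.powerset, (∑ r ∈ S, eta D r) ≠ 0 → gh S = 0 := by
    intro S hS hbne
    have hSsub := Finset.mem_powerset.mp hS
    have hsq : chi S {p : Fin n × Fin ℓ | False}.toFinset = 1 := by simp [chi]
    have swap1 : ∀ p ∈ D, ∑ w ∈ D.powerset, chi S w * g (w ∆ {p})
        = chi S {p} * gh S := by
      intro p hp
      have hstep : ∑ w ∈ D.powerset, chi S w * g (w ∆ {p})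
          = ∑ z ∈ D.powerset, chi S {p} * (g z * chi S z) := by
        refine Finset.sum_nbij' (fun w => w ∆ {p}) (fun z => z ∆ {p}) ?_ ?_ ?_ ?_ ?_
        · intro a ha; exact hmem a ha {p} (Finset.singleton_subset_iff.mpr hp)
        · intro a ha; exact hmem a ha {p} (Finset.singleton_subset_iff.mpr hp)
        · intro a _; exact symmDiff_symmDiff_cancel_right {p} a
        · intro a _; exact symmDiff_symmDiff_cancel_right {p} a
        · intro w _
          show chi S w * g (w ∆ {p}) = chi S {p} * (g (w ∆ {p}) * chi S (w ∆ {p}))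
          rw [chi_symmDiff_right]
          have hpp : chi S {p} * chi S {p} = 1 := by
            rw [chi_singleton]
            by_cases h : p ∈ S <;> simp [h]
          calc chi S w * g (w ∆ {p})
              = (chi S {p} * chi S {p}) * (chi S w * g (w ∆ {p})) := by rw [hpp]; ring
            _ = chi S {p} * (g (w ∆ {p}) * (chi S w * chi S {p})) := by ring
      rw [hstep, ← Finset.mul_sum]
    have main : (∑ p ∈ D, sgnC D p * chi S {p}) * gh S = 0 := by
      calc (∑ p ∈ D, sgnC D p * chi S {p}) * gh S
          = ∑ p ∈ D, sgnC D p * chi S {p} * gh S := Finset.sum_mul _ _ _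
        _ = ∑ p ∈ D, sgnC D p * ∑ w ∈ D.powerset, chi S w * g (w ∆ {p}) := by
            refine Finset.sum_congr rfl fun p hp => ?_
            rw [swap1 p hp]; ring
        _ = ∑ p ∈ D, ∑ w ∈ D.powerset, sgnC D p * (chi S w * g (w ∆ {p})) := by
            refine Finset.sum_congr rfl fun p _ => ?_
            rw [Finset.mul_sum]
        _ = ∑ w ∈ D.powerset, ∑ p ∈ D, sgnC D p * (chi S w * g (w ∆ {p})) := Finset.sum_comm
        _ = ∑ w ∈ D.powerset, chi S w * ∑ p ∈ D, sgnC D p * g (w ∆ {p}) := by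
            refine Finset.sum_congr rfl fun w _ => ?_
            rw [Finset.mul_sum]
            exact Finset.sum_congr rfl fun p _ => by ring
        _ = 0 := by
            refine Finset.sum_eq_zero fun w hw => ?_
            rw [grel w hw, mul_zero]
    have factor : ∑ p ∈ D, sgnC D p * chi S {p}
        = (-2 : ℂ) * ((∑ r ∈ S, eta D r : ℤ) : ℂ) := by
      have e0 : ∀ p ∈ D, sgnC D p * chi S {p}
          = sgnC D p - (if p ∈ S then 2 * sgnC D p else 0) := by
        intro p _
        rw [chi_singleton]
        by_cases h : p ∈ S
        · rw [if_pos h, if_pos h]; ring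
        · rw [if_neg h, if_neg h]; ring
      rw [Finset.sum_congr rfl e0, Finset.sum_sub_distrib]
      have h1 : ∑ p ∈ D, sgnC D p = 0 := by
        have h2 := eta_sum D
        rw [if_pos hD] at h2
        have hcast : ∑ p ∈ D, sgnC D p = ((∑ p ∈ D, eta D p : ℤ) : ℂ) := by
          push_cast
          exact Finset.sum_congr rfl fun p _ => sgnC_eq_cast D p
        rw [hcast, h2]
        simp
      have h2 : ∑ p ∈ D, (if p ∈ S then 2 * sgnC D p else 0)
          = 2 * ((∑ r ∈ S, eta D r : ℤ) : ℂ) := by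
        rw [Finset.sum_ite_mem]
        rw [Finset.inter_eq_right.mpr hSsub]
        rw [← Finset.mul_sum]
        congr 1
        push_cast
        exact Finset.sum_congr rfl fun p _ => sgnC_eq_cast D p
      rw [h1, h2]
      ring
    have hfne : (∑ p ∈ D, sgnC D p * chi S {p}) ≠ 0 := by
      rw [factor]
      exact mul_ne_zero (by norm_num) (Int.cast_ne_zero.mpr hbne)
    exact (mul_eq_zero.mp main).resolve_left hfne
  -- shifting the mode by D0 does not change gh
  have hshift : ∀ S ∈ D.powerset, gh (S ∆ D0) = gh S := by
    intro S hS
    simp only [hgh]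
    refine Finset.sum_congr rfl fun z hz => ?_
    by_cases hgz : g z = 0
    · rw [hgz]; ring
    · have hev := hsupp z hz hgz
      rw [chi_symmDiff_left]
      have h1 : chi D0 z = 1 := by
        apply chi_even
        rwa [Finset.inter_comm] at hev
      rw [h1, mul_one]
  -- antisymmetric modes vanish
  have hanti : ∀ S, Even ((S ∩ D0).card) → gh S = 0 := by
    intro S hev
    have hchi2 : ∀ z : Finset (Fin n × Fin ℓ), chi S z * chi S z = 1 := by
      intro z
      rw [chi, ← pow_add]
      exact Even.neg_one_pow ⟨(S ∩ z).card, rfl⟩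
    have h1 : gh S = ∑ z ∈ D.powerset, (-(g z * chi S z)) * chi S D0 := by
      simp only [hgh]
      refine Finset.sum_nbij' (fun z => z ∆ D0) (fun z => z ∆ D0) ?_ ?_ ?_ ?_ ?_
      · intro a ha; exact hmem a ha D0 hD0sub
      · intro a ha; exact hmem a ha D0 hD0sub
      · intro a _; exact symmDiff_symmDiff_cancel_right D0 a
      · intro a _; exact symmDiff_symmDiff_cancel_right D0 a
      · intro z _
        show g z * chi S z = (-(g (z ∆ D0) * chi S (z ∆ D0))) * chi S D0
        have hgneg : g (z ∆ D0) = - g z := by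
          simp only [hg]
          rw [symmDiff_symmDiff_cancel_right D0 z]
          ring
        rw [hgneg, chi_symmDiff_right]
        calc g z * chi S z = (g z * chi S z) * (chi S D0 * chi S D0) := by rw [hchi2]; ring
          _ = (-(- g z * (chi S z * chi S D0))) * chi S D0 := by ring
    have hD0even : chi S D0 = 1 := chi_even hev
    rw [hD0even] at h1
    have hsum : ∑ z ∈ D.powerset, (-(g z * chi S z)) * 1 = - gh S := by
      simp only [hgh, mul_one]
      rw [← Finset.sum_neg_distrib]
    have h3 : (2 : ℂ) * gh S = 0 := by
      rw [two_mul]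
      nth_rewrite 1 [h1]
      rw [hsum]
      ring
    exact (mul_eq_zero.mp h3).resolve_left two_ne_zero
  -- all modes vanish
  have hzero : ∀ S ∈ D.powerset, gh S = 0 := by
    intro S hS
    by_cases hev : Even ((S ∩ D0).card)
    · exact hanti S hev
    · by_cases hb : (∑ r ∈ S, eta D r) = 0
      · have hβ0 : (∑ r ∈ S ∩ D0, eta D r) ≠ 0 := beta_ne_zero_of_odd hev
        have e2 : (∑ r ∈ S \ D0, eta D r) + (∑ r ∈ S ∩ D0, eta D r) = ∑ r ∈ S, eta D r := by
          rw [← Finset.sum_union (Finset.disjoint_sdiff_inter S D0)]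
          rw [Finset.sdiff_union_inter]
        have e3 : (∑ r ∈ D0 \ S, eta D r) + (∑ r ∈ D0 ∩ S, eta D r) = ∑ r ∈ D0, eta D r := by
          rw [← Finset.sum_union (Finset.disjoint_sdiff_inter D0 S)]
          rw [Finset.sdiff_union_inter]
        have e4 : ∑ r ∈ S ∆ D0, eta D r
            = (∑ r ∈ S \ D0, eta D r) + (∑ r ∈ D0 \ S, eta D r) := by
          rw [show S ∆ D0 = (S \ D0) ∪ (D0 \ S) from by
            rw [symmDiff_def, Finset.sup_eq_union]]
          rw [Finset.sum_union disjoint_sdiff_sdiff]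
        have e5 : (∑ r ∈ D0 ∩ S, eta D r) = ∑ r ∈ S ∩ D0, eta D r := by
          rw [Finset.inter_comm]
        have hD0sum : (∑ r ∈ D0, eta D r) = 0 := beta_D0_zero hk hD0
        have hne2 : (∑ r ∈ S ∆ D0, eta D r) ≠ 0 := by
          intro hzero2
          apply hβ0
          rw [e4] at hzero2
          omega
        have := hbal _ (hmem S hS D0 hD0sub) hne2
        rw [hshift S hS] at this
        exact this
      · exact hbal S hS hb
  -- inversion at ∅
  have hsum0 : ∑ S ∈ D.powerset, gh S = 0 := Finset.sum_eq_zero hzero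
  have hswap : ∑ S ∈ D.powerset, gh S
      = ∑ z ∈ D.powerset, g z * ∑ S ∈ D.powerset, chi S z := by
    simp only [hgh]
    rw [Finset.sum_comm]
    exact Finset.sum_congr rfl fun z _ => (Finset.mul_sum _ _ _).symm
  have hfinal : ∑ z ∈ D.powerset, g z * ∑ S ∈ D.powerset, chi S z
      = g ∅ * (2 : ℂ) ^ D.card := by
    rw [Finset.sum_eq_single_of_mem ∅ (Finset.empty_mem_powerset D)]
    · congr 1
      rw [Finset.sum_congr rfl fun S _ => chi_empty S]
      rw [Finset.sum_const, Finset.card_powerset]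
      simp
    · intro z hz hne
      rw [orth D z (Finset.mem_powerset.mp hz) hne, mul_zero]
  rw [hswap, hfinal] at hsum0
  have hg0 : g ∅ = 0 := by
    rcases mul_eq_zero.mp hsum0 with h | h
    · exact h
    · exact absurd h (pow_ne_zero _ two_ne_zero)
  have hemp : (∅ ∆ D0 : Finset (Fin n × Fin ℓ)) = D0 := by
    rw [symmDiff_comm, show (∅ : Finset (Fin n × Fin ℓ)) = ⊥ from rfl, symmDiff_bot]
  simp only [hg] at hg0
  rw [hemp] at hg0
  have := sub_eq_zero.mp hg0
  exact this.symm


lemma flipS_filter_update {x y : Fin n → Fin ℓ → Bool} (k : Fin n) :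
    flipS x ((diffSet x y).filter fun q => q.1 = k) = Function.update x k (y k) := by
  funext j i
  rcases eq_or_ne j k with rfl | hj
  · rw [Function.update_self]
    have hiff : (((j, i) : Fin n × Fin ℓ) ∈ (diffSet x y).filter fun q => q.1 = j)
        ↔ x j i ≠ y j i := by
      constructor
      · intro h; exact mem_diffSet.mp (Finset.mem_filter.mp h).1
      · intro h; exact Finset.mem_filter.mpr ⟨mem_diffSet.mpr h, rfl⟩
    show Bool.xor (x j i) (decide _) = y j i
    rw [decide_eq_decide.mpr hiff]
    by_cases hxy : x j i = y j i
    · simp [hxy]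
    · have h1 : decide (x j i ≠ y j i) = true := by simpa using hxy
      rw [h1]
      cases hy : y j i
      · have hx : x j i = true := by cases hx : x j i <;> simp_all
        rw [hx]; rfl
      · have hx : x j i = false := by cases hx : x j i <;> simp_all
        rw [hx]; rfl
  · rw [Function.update_of_ne hj]
    have hnm : ((j, i) : Fin n × Fin ℓ) ∉ (diffSet x y).filter fun q => q.1 = k := by
      intro h
      exact hj (Finset.mem_filter.mp h).2
    show Bool.xor (x j i) (decide _) = x j i
    rw [decide_eq_false hnm]
    exact Bool.xor_false _

lemma diffSet_comm_filter (x y : Fin n → Fin ℓ → Bool) :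
    diffSet y x = diffSet x y := by
  ext q
  rw [mem_diffSet, mem_diffSet]
  exact ne_comm

lemma key {Γ : (Fin n → Fin ℓ → Bool) → ℂ} (hpar : ParityCond Γ) (hmgi : MGI Γ)
    (hng : ¬ Good Γ) {x y : Fin n → Fin ℓ → Bool} (hx : Γ x ≠ 0) (hy : Γ y ≠ 0) (k : Fin n)
    (hk : ∀ j : Fin n, k ≤ j) :
    Γ x * Γ y = Γ (Function.update x k (y k)) * Γ (Function.update y k (x k)) := by
  have hyflip : Γ (flipS x (diffSet x y)) ≠ 0 := by rw [flipS_diffSet]; exact hy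
  have hfour := fourier (D := diffSet x y) (k := k) (fun q _ => hk q.1)
    (fun z => Γ (flipS x z) * Γ (flipS y z))
    (fun w _ => by
      have := master hmgi x y w
      rw [← this]
      exact Finset.sum_congr rfl fun p _ => by ring)
    (fun z _ hodd => by
      show Γ (flipS x z) * Γ (flipS y z) = 0
      by_contra hFne
      have h1 : Γ (flipS x z) ≠ 0 := fun h => hFne (by rw [h, zero_mul])
      exact hodd (kill_odd hpar hmgi hng hx h1 k))
    (even_card_of_nonzero hpar hx hyflip)
    (kill_odd hpar hmgi hng hx hyflip k)
  have hfour' : Γ (flipS x ((diffSet x y).filter fun q => q.1 = k))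
      * Γ (flipS y ((diffSet x y).filter fun q => q.1 = k))
      = Γ (flipS x ∅) * Γ (flipS y ∅) := hfour
  rw [flipS_empty, flipS_empty] at hfour'
  rw [flipS_filter_update (y := y) k] at hfour'
  have hyx : flipS y ((diffSet x y).filter fun q => q.1 = k)
      = Function.update y k (x k) := by
    rw [← diffSet_comm_filter x y]
    exact flipS_filter_update (y := x) k
  rw [hyx] at hfour'
  exact hfour'.symm

lemma cons0_at_zero {k : Fin n} (hk0 : (k : ℕ) = 0) (a : Fin ℓ → Bool)
    (b : Fin (n - 1) → Fin ℓ → Bool) : cons0 a b k = a := by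
  simp [cons0, hk0]

lemma update_cons0 {k : Fin n} (hk0 : (k : ℕ) = 0) (a c : Fin ℓ → Bool)
    (b : Fin (n - 1) → Fin ℓ → Bool) :
    Function.update (cons0 a b) k c = cons0 c b := by
  funext j
  rcases eq_or_ne j k with rfl | hj
  · rw [Function.update_self]
    exact (cons0_at_zero hk0 c b).symm
  · rw [Function.update_of_ne hj]
    have hj0 : (j : ℕ) ≠ 0 := by
      intro h
      exact hj (Fin.ext (by rw [h, hk0]))
    simp [cons0, hj0]

lemma all_minors (hn : 0 < n) {Γ : (Fin n → Fin ℓ → Bool) → ℂ}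
    (hpar : ParityCond Γ) (hmgi : MGI Γ) (hng : ¬ Good Γ)
    (a a' : Fin ℓ → Bool) (b b' : Fin (n - 1) → Fin ℓ → Bool) :
    Γ (cons0 a b) * Γ (cons0 a' b') = Γ (cons0 a b') * Γ (cons0 a' b) := by
  set k : Fin n := ⟨0, hn⟩ with hkdef
  have hk0 : (k : ℕ) = 0 := rfl
  have hk : ∀ j : Fin n, k ≤ j := fun j => by
    simp [Fin.le_def, hk0]
  by_cases hL : Γ (cons0 a b) * Γ (cons0 a' b') = 0
  · by_cases hR : Γ (cons0 a b') * Γ (cons0 a' b) = 0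
    · rw [hL, hR]
    · have hx : Γ (cons0 a b') ≠ 0 := left_ne_zero_of_mul hR
      have hy : Γ (cons0 a' b) ≠ 0 := right_ne_zero_of_mul hR
      have hkey := key hpar hmgi hng hx hy k hk
      rw [show cons0 a' b k = a' from cons0_at_zero hk0 a' b,
          show cons0 a b' k = a from cons0_at_zero hk0 a b',
          update_cons0 hk0 a a' b', update_cons0 hk0 a' a b] at hkey
      have h0 : Γ (cons0 a' b') * Γ (cons0 a b) = 0 := by rw [mul_comm]; exact hL
      exact absurd (hkey.trans h0) hR
  · have hx : Γ (cons0 a b) ≠ 0 := left_ne_zero_of_mul hL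
    have hy : Γ (cons0 a' b') ≠ 0 := right_ne_zero_of_mul hL
    have hkey := key hpar hmgi hng hx hy k hk
    rw [show cons0 a' b' k = a' from cons0_at_zero hk0 a' b',
        show cons0 a b k = a from cons0_at_zero hk0 a b,
        update_cons0 hk0 a a' b, update_cons0 hk0 a' a b'] at hkey
    rw [hkey]
    ring

lemma rank_le_one_of_minors {Γ : (Fin n → Fin ℓ → Bool) → ℂ}
    (h : ∀ a a' b b', Γ (cons0 a b) * Γ (cons0 a' b') = Γ (cons0 a b') * Γ (cons0 a' b)) :
    (matrixForm Γ).rank ≤ 1 := by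
  classical
  set M := matrixForm Γ with hM
  by_cases h0 : ∀ a b, M a b = 0
  · have hzero : M = 0 := by
      ext a b; exact h0 a b
    rw [hzero]
    simp
  · push_neg at h0
    obtain ⟨a0, b0, hab⟩ := h0
    rw [Matrix.rank]
    have hsub : LinearMap.range (Matrix.mulVecLin M)
        ≤ Submodule.span ℂ {fun a => M a b0} := by
      rintro v ⟨c, rfl⟩
      rw [Submodule.mem_span_singleton]
      refine ⟨(∑ b, M a0 b * c b) / M a0 b0, ?_⟩
      funext a
      show (∑ b, M a0 b * c b) / M a0 b0 * M a b0 = ∑ b, M a b * c b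
      rw [div_mul_eq_mul_div, div_eq_iff hab, Finset.sum_mul, Finset.sum_mul]
      refine Finset.sum_congr rfl fun b _ => ?_
      have hminor : M a b * M a0 b0 = M a b0 * M a0 b := h a a0 b b0
      linear_combination (-(c b)) * hminor
    calc Module.finrank ℂ ↥(LinearMap.range (Matrix.mulVecLin M))
        ≤ Module.finrank ℂ ↥(Submodule.span ℂ {fun a => M a b0}) :=
          Submodule.finrank_mono hsub
      _ ≤ 1 := by
          by_cases hv : (fun a => M a b0) = 0
          · rw [hv, Submodule.span_zero_singleton]
            simp
          · rw [finrank_span_singleton hv]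


lemma flipBlock_eq_flipS (α : Fin n → Fin ℓ → Bool) (j : Fin n) (t : Fin ℓ) :
    flipBlock α j (unit t) = flipS α {(j, t)} := by
  funext j' i
  rcases eq_or_ne j' j with rfl | hj
  · rw [flipBlock, Function.update_self]
    show Bool.xor (α j' i) (decide (i = t)) = Bool.xor (α j' i) (decide _)
    congr 1
    rw [decide_eq_decide]
    constructor
    · intro h
      rw [Finset.mem_singleton]
      exact Prod.ext rfl h
    · intro h
      rw [Finset.mem_singleton] at h
      exact congrArg Prod.snd h
  · rw [flipBlock, Function.update_of_ne hj]
    have hnm : ((j', i) : Fin n × Fin ℓ) ∉ ({(j, t)} : Finset (Fin n × Fin ℓ)) := by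
      intro h
      rw [Finset.mem_singleton] at h
      exact hj (congrArg Prod.fst h)
    show α j' i = Bool.xor (α j' i) (decide _)
    rw [decide_eq_false hnm]
    exact (Bool.xor_false _).symm

end Aux

/-- if `rank M(Γ) ≥ 2` then `M(Γ)` has a nonsingular `2×2` submatrix whose
rows differ by one bit flip in the first block and whose columns differ by one bit flip in
the second block, and (by parity) either both off-diagonal or both diagonal entries
vanish. -/
theorem stmt4 (n ℓ : ℕ) (hn : 2 ≤ n) (hℓ : 1 ≤ ℓ)
    (Γ : (Fin n → Fin ℓ → Bool) → ℂ)
    (hsym : BlockSym Γ) (hpar : ParityCond Γ) (hmgi : MGI Γ)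
    (hrank : 2 ≤ (matrixForm Γ).rank) :
    ∃ (α : Fin n → Fin ℓ → Bool) (s t : Fin ℓ),
      Matrix.det
        !![Γ α, Γ (flipBlock α ⟨1, by omega⟩ (unit t));
           Γ (flipBlock α ⟨0, by omega⟩ (unit s)),
           Γ (flipBlock (flipBlock α ⟨0, by omega⟩ (unit s)) ⟨1, by omega⟩ (unit t))] ≠ 0 ∧
      ((Γ (flipBlock α ⟨1, by omega⟩ (unit t)) = 0 ∧
          Γ (flipBlock α ⟨0, by omega⟩ (unit s)) = 0) ∨
       (Γ α = 0 ∧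
          Γ (flipBlock (flipBlock α ⟨0, by omega⟩ (unit s)) ⟨1, by omega⟩ (unit t)) = 0)) := by
  have hGood : Good Γ := by
    by_contra hng
    have h1 : (matrixForm Γ).rank ≤ 1 :=
      rank_le_one_of_minors (fun a a' b b' =>
        all_minors (by omega) hpar hmgi hng a a' b b')
    omega
  obtain ⟨u, p, q, hpq, hu, huv⟩ := hGood
  set z0 : Fin n := ⟨0, by omega⟩ with hz0
  set z1 : Fin n := ⟨1, by omega⟩ with hz1
  have hz01 : z0 ≠ z1 := by
    intro h
    have := congrArg Fin.val h
    simp [hz0, hz1] at this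
  set τ1 : Equiv.Perm (Fin n) := Equiv.swap z0 p.1 with hτ1
  set k' : Fin n := τ1 q.1 with hk'
  set τ2 : Equiv.Perm (Fin n) := Equiv.swap z1 k' with hτ2
  set σ : Equiv.Perm (Fin n) := τ2.trans τ1 with hσ
  have hτ1inv : ∀ a, τ1 (τ1 a) = a := fun a => Equiv.swap_apply_self _ _ _
  have hσ0 : σ z0 = p.1 := by
    have hne1 : z0 ≠ k' := by
      intro h
      have : τ1 z0 = τ1 k' := congrArg τ1 h
      rw [hk', hτ1inv] at this
      rw [hτ1] at this
      rw [Equiv.swap_apply_left] at this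
      exact hpq this
    have h2 : τ2 z0 = z0 := by
      rw [hτ2]
      exact Equiv.swap_apply_of_ne_of_ne hz01 hne1
    show τ1 (τ2 z0) = p.1
    rw [h2, hτ1, Equiv.swap_apply_left]
  have hσ1 : σ z1 = q.1 := by
    have h2 : τ2 z1 = k' := by rw [hτ2]; exact Equiv.swap_apply_left _ _
    show τ1 (τ2 z1) = q.1
    rw [h2, hk', hτ1inv]
  set β := u ∘ σ with hβ
  have hβne : Γ β ≠ 0 := by rw [hβ, hsym σ u]; exact hu
  have hset_mem : ∀ (m : Fin n) (i : Fin ℓ),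
      (((m, i) : Fin n × Fin ℓ) ∈ ({(z0, p.2), (z1, q.2)} : Finset (Fin n × Fin ℓ)))
        ↔ (((σ m, i) : Fin n × Fin ℓ) ∈ ({p, q} : Finset (Fin n × Fin ℓ))) := by
    intro m i
    simp only [Finset.mem_insert, Finset.mem_singleton, Prod.ext_iff]
    constructor
    · rintro (⟨hm, hi⟩ | ⟨hm, hi⟩)
      · exact Or.inl ⟨by rw [hm, hσ0], hi⟩
      · exact Or.inr ⟨by rw [hm, hσ1], hi⟩
    · rintro (⟨hm, hi⟩ | ⟨hm, hi⟩)
      · refine Or.inl ⟨?_, hi⟩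
        have : σ m = σ z0 := by rw [hσ0, hm]
        exact σ.injective this
      · refine Or.inr ⟨?_, hi⟩
        have : σ m = σ z1 := by rw [hσ1, hm]
        exact σ.injective this
  have hγ : flipS β {(z0, p.2), (z1, q.2)} = (flipS u {p, q}) ∘ σ := by
    funext m i
    show Bool.xor (u (σ m) i) (decide _) = Bool.xor (u (σ m) i) (decide _)
    congr 1
    rw [decide_eq_decide]
    exact hset_mem m i
  have hγne : Γ (flipS β {(z0, p.2), (z1, q.2)}) ≠ 0 := by
    rw [hγ, hsym σ _]
    exact huv
  refine ⟨β, p.2, q.2, ?_, ?_⟩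
  · -- determinant
    have hodd1 : Γ (flipBlock β z1 (unit q.2)) = 0 := by
      rw [flipBlock_eq_flipS]
      by_contra hne0
      have hev := even_card_of_nonzero hpar hβne hne0
      rw [Finset.card_singleton] at hev
      exact (Nat.not_even_one) hev
    have hodd2 : Γ (flipBlock β z0 (unit p.2)) = 0 := by
      rw [flipBlock_eq_flipS]
      by_contra hne0
      have hev := even_card_of_nonzero hpar hβne hne0
      rw [Finset.card_singleton] at hev
      exact (Nat.not_even_one) hev
    have hdiag : Γ (flipBlock (flipBlock β z0 (unit p.2)) z1 (unit q.2)) ≠ 0 := by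
      rw [flipBlock_eq_flipS, flipBlock_eq_flipS, flipS_flipS]
      have hne : ((z0, p.2) : Fin n × Fin ℓ) ≠ (z1, q.2) := by
        intro h
        exact hz01 (congrArg Prod.fst h)
      rw [pair_eq_symmDiff hne]
      exact hγne
    rw [Matrix.det_fin_two_of, hodd1, hodd2]
    rw [mul_zero, sub_zero]
    exact mul_ne_zero hβne hdiag
  · left
    constructor
    · rw [flipBlock_eq_flipS]
      by_contra hne0
      have hev := even_card_of_nonzero hpar hβne hne0
      rw [Finset.card_singleton] at hev
      exact (Nat.not_even_one) hev
    · rw [flipBlock_eq_flipS]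
      by_contra hne0
      have hev := even_card_of_nonzero hpar hβne hne0
      rw [Finset.card_singleton] at hev
      exact (Nat.not_even_one) hev


end Matchgate
end
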